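/- arXiv:2112.10248 — 3 statements merged into one kernel-verified Lean document; each statement's English description precedes it below -/
import Mathlib

section
/- Let Z_1 and Z_0 be independent standard normal random variables and, for ρ ∈ (−1, 1), set Z_2 = ρ Z_1 + √(1 − ρ²) Z_0, so that (Z_1, Z_2) is bivariate standard Gaussian with correlation ρ. Let R be a Pareto(γ) random variable, γ > 0, independent of (Z_1, Z_0), and set W_i = R·Z_i for i = 1, 2. Then lim_{x→∞} P(W_1 > x and W_2 > x) / P(W_2 > x) = 2·T̄_{γ+1}( [(γ + 1)(1 − ρ)/(1 + ρ)]^{1/2} ). -/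
open MeasureTheory ProbabilityTheory Filter

/-- The density of Student's t distribution with `d` degrees of freedom. -/
noncomputable def studentTPdf (d u : ℝ) : ℝ :=
  Real.Gamma ((d + 1) / 2) / (Real.sqrt (d * Real.pi) * Real.Gamma (d / 2)) *
    (1 + u ^ 2 / d) ^ (-((d + 1) / 2))

/-- The survival function `T̄_d(x) = ∫_x^∞ t_d(u) du` of Student's t distribution
with `d` degrees of freedom. -/
noncomputable def studentTSurvival (d x : ℝ) : ℝ :=
  ∫ u in Set.Ioi x, studentTPdf d u

namespace HotAux

open MeasureTheory ProbabilityTheory Filter Set Real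
open scoped ENNReal NNReal

lemma measurable_gpdf2 (ρ : ℝ) (v : ℝ≥0) :
    Measurable fun p : ℝ × ℝ => gaussianPDF (ρ * p.1) v p.2 := by
  simp only [gaussianPDF, gaussianPDFReal]
  fun_prop

lemma pdf_symm {ρ : ℝ} (hρ₁ : -1 < ρ) (hρ₂ : ρ < 1) {vb : ℝ≥0} (hvb : (vb : ℝ) = 1 - ρ ^ 2)
    (z y : ℝ) :
    gaussianPDF 0 1 z * gaussianPDF (ρ * z) vb y
      = gaussianPDF 0 1 y * gaussianPDF (ρ * y) vb z := by
  have h1 : (0:ℝ) < 1 - ρ ^ 2 := by nlinarith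
  simp only [gaussianPDF, ← ENNReal.ofReal_mul (gaussianPDFReal_nonneg _ _ _)]
  congr 1
  simp only [gaussianPDFReal, hvb, NNReal.coe_one]
  rw [mul_mul_mul_comm ((√(2 * π * 1))⁻¹) (rexp (-(z - 0) ^ 2 / (2 * 1))),
    mul_mul_mul_comm ((√(2 * π * 1))⁻¹) (rexp (-(y - 0) ^ 2 / (2 * 1))),
    ← Real.exp_add, ← Real.exp_add]
  congr 1
  field_simp
  ring

/-- The key symmetry/swap ("exchangeability") lemma. -/
lemma mixture {ρ : ℝ} (hρ₁ : -1 < ρ) (hρ₂ : ρ < 1) {vb : ℝ≥0} (hvb : (vb : ℝ) = 1 - ρ ^ 2)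
    (f : ℝ → ℝ → ℝ≥0∞) (hf : Measurable (Function.uncurry f)) :
    ∫⁻ z, ∫⁻ y, f z y ∂(gaussianReal (ρ * z) vb) ∂(gaussianReal 0 1)
      = ∫⁻ y, ∫⁻ z, f z y ∂(gaussianReal (ρ * y) vb) ∂(gaussianReal 0 1) := by
  have h1 : (0:ℝ) < 1 - ρ ^ 2 := by nlinarith
  have hvb0 : vb ≠ 0 := by
    intro h; rw [h] at hvb; simp at hvb; nlinarith
  have hstep : ∀ g : ℝ → ℝ → ℝ≥0∞, Measurable (Function.uncurry g) →
      ∫⁻ z, ∫⁻ y, g z y ∂(gaussianReal (ρ * z) vb) ∂(gaussianReal 0 1)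
        = ∫⁻ z, ∫⁻ y, gaussianPDF 0 1 z * (gaussianPDF (ρ * z) vb y * g z y) ∂volume ∂volume := by
    intro g hg
    have hjg : Measurable (Function.uncurry fun z y => gaussianPDF (ρ * z) vb y * g z y) := by
      exact (measurable_gpdf2 ρ vb).mul hg
    have h2 : ∀ z, ∫⁻ y, g z y ∂(gaussianReal (ρ * z) vb)
        = ∫⁻ y, gaussianPDF (ρ * z) vb y * g z y ∂volume := by
      intro z
      rw [gaussianReal_of_var_ne_zero _ hvb0,
        lintegral_withDensity_eq_lintegral_mul volume (measurable_gaussianPDF _ _)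
          (hg.of_uncurry_left)]
      simp only [Pi.mul_apply]
    calc ∫⁻ z, ∫⁻ y, g z y ∂(gaussianReal (ρ * z) vb) ∂(gaussianReal 0 1)
        = ∫⁻ z, ∫⁻ y, gaussianPDF (ρ * z) vb y * g z y ∂volume ∂(gaussianReal 0 1) := by
          exact lintegral_congr fun z => h2 z
      _ = ∫⁻ z, gaussianPDF 0 1 z *
            ∫⁻ y, gaussianPDF (ρ * z) vb y * g z y ∂volume ∂volume := by
          rw [gaussianReal_of_var_ne_zero _ one_ne_zero,
            lintegral_withDensity_eq_lintegral_mul volume (measurable_gaussianPDF _ _)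
              (Measurable.lintegral_prod_right hjg)]
          simp only [Pi.mul_apply]
      _ = ∫⁻ z, ∫⁻ y, gaussianPDF 0 1 z * (gaussianPDF (ρ * z) vb y * g z y) ∂volume ∂volume := by
          exact lintegral_congr fun z => (lintegral_const_mul _ hjg.of_uncurry_left).symm
  rw [hstep f hf, hstep (fun y z => f z y) (by exact hf.comp measurable_swap)]
  rw [lintegral_lintegral_swap]
  · refine lintegral_congr fun y => lintegral_congr fun z => ?_
    rw [← mul_assoc, ← mul_assoc, pdf_symm hρ₁ hρ₂ hvb]
  · exact (((measurable_gaussianPDF 0 1).comp measurable_fst).mul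
      ((measurable_gpdf2 ρ vb).mul hf)).aemeasurable


lemma measurable_M (γ : ℝ) : Measurable fun z : ℝ => ENNReal.ofReal (max z 0 ^ γ) :=
  (((measurable_id.max measurable_const).pow measurable_const)).ennreal_ofReal

lemma measurable_Mcap (γ x : ℝ) :
    Measurable fun z : ℝ => ENNReal.ofReal (min (max z 0) x ^ γ) :=
  ((((measurable_id.max measurable_const).min measurable_const).pow
    measurable_const)).ennreal_ofReal

lemma map_affine {ρ : ℝ} (hρ₁ : -1 < ρ) (hρ₂ : ρ < 1) {vb : ℝ≥0}
    (hvb : (vb : ℝ) = 1 - ρ ^ 2) (z : ℝ) :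
    (gaussianReal 0 1).map (fun w => ρ * z + √(1 - ρ ^ 2) * w) = gaussianReal (ρ * z) vb := by
  have h1 : (0:ℝ) < 1 - ρ ^ 2 := by nlinarith
  have hc : (fun w : ℝ => ρ * z + √(1 - ρ ^ 2) * w)
      = (fun y => y + ρ * z) ∘ (fun w : ℝ => √(1 - ρ ^ 2) * w) := by
    funext w; simp [Function.comp, add_comm]
  rw [hc, ← Measure.map_map (f := fun w : ℝ => √(1 - ρ ^ 2) * w)
    (g := fun y : ℝ => y + ρ * z) (by fun_prop) (by fun_prop),
    gaussianReal_map_const_mul, gaussianReal_map_add_const]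
  congr 1
  · simp
  · ext
    simp [Real.sq_sqrt h1.le, hvb]

lemma measurable_g2 (ρ c : ℝ) : Measurable fun p : ℝ × ℝ => ρ * p.1 + c * p.2 :=
  (measurable_fst.const_mul ρ).add (measurable_snd.const_mul c)

lemma map_g2 {ρ : ℝ} (hρ₁ : -1 < ρ) (hρ₂ : ρ < 1) {vb : ℝ≥0}
    (hvb : (vb : ℝ) = 1 - ρ ^ 2) :
    ((gaussianReal 0 1).prod (gaussianReal 0 1)).map
        (fun p : ℝ × ℝ => ρ * p.1 + √(1 - ρ ^ 2) * p.2) = gaussianReal 0 1 := by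
  ext s hs
  rw [Measure.map_apply (measurable_g2 _ _) hs,
    Measure.prod_apply ((measurable_g2 _ _) hs)]
  have slice : ∀ z : ℝ, (gaussianReal 0 1)
      (Prod.mk z ⁻¹' ((fun p : ℝ × ℝ => ρ * p.1 + √(1 - ρ ^ 2) * p.2) ⁻¹' s))
      = (gaussianReal (ρ * z) vb) s := by
    intro z
    have h : Prod.mk z ⁻¹' ((fun p : ℝ × ℝ => ρ * p.1 + √(1 - ρ ^ 2) * p.2) ⁻¹' s)
        = (fun w => ρ * z + √(1 - ρ ^ 2) * w) ⁻¹' s := rfl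
    rw [h, ← Measure.map_apply (by fun_prop) hs, map_affine hρ₁ hρ₂ hvb]
  rw [lintegral_congr slice]
  have h2 : ∀ z : ℝ, (gaussianReal (ρ * z) vb) s
      = ∫⁻ y, s.indicator 1 y ∂(gaussianReal (ρ * z) vb) :=
    fun z => (lintegral_indicator_one hs).symm
  rw [lintegral_congr h2,
    mixture hρ₁ hρ₂ hvb (fun _ y => s.indicator 1 y)
      ((measurable_one.indicator hs).comp measurable_snd)]
  simp only [lintegral_const, measure_univ, mul_one]
  exact lintegral_indicator_one hs

lemma lint_gauss (g : ℝ → ℝ≥0∞) (hg : Measurable g) :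
    ∫⁻ z, g z ∂(gaussianReal 0 1) = ∫⁻ z, gaussianPDF 0 1 z * g z ∂volume := by
  rw [gaussianReal_of_var_ne_zero _ one_ne_zero,
    lintegral_withDensity_eq_lintegral_mul volume (measurable_gaussianPDF _ _) hg]
  simp only [Pi.mul_apply]

lemma gr_mul (z u : ℝ) : gaussianPDFReal 0 1 z * gaussianPDFReal 0 1 u
    = (2 * π)⁻¹ * rexp (-((z ^ 2 + u ^ 2) / 2)) := by
  simp only [gaussianPDFReal, NNReal.coe_one, mul_one, sub_zero]
  rw [mul_mul_mul_comm, ← mul_inv, Real.mul_self_sqrt (by positivity), ← Real.exp_add]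
  congr 1
  ring

lemma scale_Ioi (f : ℝ → ℝ≥0∞) (hf : Measurable f) {z : ℝ} (hz : 0 < z) (c : ℝ) :
    ∫⁻ w in Ioi (z * c), f w ∂volume
      = ENNReal.ofReal z * ∫⁻ t in Ioi c, f (z * t) ∂volume := by
  have h1 : ∫⁻ t in Ioi c, f (z * t) ∂volume
      = ∫⁻ t, (Ioi (z * c)).indicator f (z * t) ∂volume := by
    rw [← lintegral_indicator measurableSet_Ioi]
    refine lintegral_congr fun t => ?_
    by_cases ht : t ∈ Ioi c
    · rw [indicator_of_mem ht, indicator_of_mem (by exact (mul_lt_mul_iff_right₀ hz).2 ht)]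
    · rw [indicator_of_notMem ht, indicator_of_notMem (by
        simp only [mem_Ioi, not_lt] at ht ⊢
        exact (mul_le_mul_iff_right₀ hz).2 ht)]
  have h2 : ∫⁻ t, (Ioi (z * c)).indicator f (z * t) ∂volume
      = ∫⁻ w, (Ioi (z * c)).indicator f w ∂(volume.map (fun t : ℝ => z * t)) := by
    rw [lintegral_map (hf.indicator measurableSet_Ioi) (measurable_const_mul z)]
  rw [h1, h2, Real.map_volume_mul_left hz.ne', lintegral_smul_measure,
    lintegral_indicator measurableSet_Ioi, abs_of_pos (inv_pos.2 hz), smul_eq_mul,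
    ← mul_assoc, ← ENNReal.ofReal_mul hz.le, mul_inv_cancel₀ hz.ne', ENNReal.ofReal_one, one_mul]

lemma c2_eq {γ : ℝ} (hγ : 0 < γ) :
    ∫⁻ z, ENNReal.ofReal (max z 0 ^ γ) ∂(gaussianReal 0 1)
      = ENNReal.ofReal ((√(2*π))⁻¹ *
          ((2⁻¹:ℝ) ^ (-(γ+1)/2) * (1/2) * Real.Gamma ((γ+1)/2))) := by
  rw [lint_gauss _ (measurable_M γ)]
  have hpt : ∀ z : ℝ, gaussianPDF 0 1 z * ENNReal.ofReal (max z 0 ^ γ)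
      = (Ioi (0:ℝ)).indicator
          (fun z => ENNReal.ofReal ((√(2*π))⁻¹ * (z ^ γ * rexp (-(2⁻¹) * z ^ 2)))) z := by
    intro z
    by_cases hz : z ∈ Ioi (0:ℝ)
    · rw [indicator_of_mem hz]
      have hz' : (0:ℝ) < z := hz
      rw [max_eq_left hz'.le, gaussianPDF, ← ENNReal.ofReal_mul (gaussianPDFReal_nonneg _ _ _)]
      congr 1
      simp only [gaussianPDFReal, NNReal.coe_one, mul_one, sub_zero]
      rw [show -z^2/(2:ℝ) = -(2⁻¹) * z^2 by ring]
      ring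
    · rw [indicator_of_notMem hz]
      have hz' : z ≤ 0 := by simpa using hz
      rw [max_eq_right hz', Real.zero_rpow hγ.ne', ENNReal.ofReal_zero, mul_zero]
  rw [lintegral_congr hpt, lintegral_indicator measurableSet_Ioi]
  simp_rw [ENNReal.ofReal_mul (by positivity : (0:ℝ) ≤ (√(2*π))⁻¹)]
  have hm1 : Measurable fun z : ℝ => ENNReal.ofReal (z ^ γ * rexp (-(2⁻¹) * z ^ 2)) := by
    exact ((measurable_id.pow measurable_const).mul
      (((measurable_id.pow measurable_const).const_mul _).exp)).ennreal_ofReal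
  rw [lintegral_const_mul _ hm1]
  have hInt : IntegrableOn (fun z : ℝ => z ^ γ * rexp (-(2⁻¹) * z ^ 2)) (Ioi 0) := by
    simpa using integrableOn_rpow_mul_exp_neg_mul_sq (by norm_num : (0:ℝ) < 2⁻¹)
      (by linarith : (-1:ℝ) < γ)
  have hnn : 0 ≤ᵐ[volume.restrict (Ioi (0:ℝ))] fun z : ℝ => z ^ γ * rexp (-(2⁻¹) * z ^ 2) := by
    filter_upwards [ae_restrict_mem measurableSet_Ioi] with z hz
    have : (0:ℝ) < z := hz
    positivity
  rw [← ofReal_integral_eq_lintegral_ofReal hInt hnn]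
  have hval : ∫ z in Ioi (0:ℝ), z ^ γ * rexp (-(2⁻¹) * z ^ 2)
      = (2⁻¹:ℝ) ^ (-(γ+1)/2) * (1/2) * Real.Gamma ((γ+1)/2) := by
    have h := integral_rpow_mul_exp_neg_mul_rpow (two_pos) (by linarith : (-1:ℝ) < γ)
      (by norm_num : (0:ℝ) < 2⁻¹)
    rw [← h]
    refine setIntegral_congr_fun measurableSet_Ioi fun z hz => ?_
    rw [Real.rpow_two]
  rw [hval, ← ENNReal.ofReal_mul (by positivity)]

lemma J_eq {γ : ℝ} (hγ : 0 < γ) (a : ℝ) :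
    ∫⁻ z, ENNReal.ofReal (max z 0 ^ γ) * (gaussianReal 0 1) (Ioi (a*z)) ∂(gaussianReal 0 1)
      = ENNReal.ofReal ((2*π)⁻¹ * (2 ^ ((γ+2)/2) * (1/2) * Real.Gamma ((γ+2)/2)))
        * ∫⁻ t in Ioi a, ENNReal.ofReal ((1+t^2) ^ (-((γ+2)/2))) ∂volume := by
  have hanti : Measurable fun c : ℝ => (gaussianReal 0 1) (Ioi c) :=
    Antitone.measurable (fun i j hij => measure_mono (Ioi_subset_Ioi hij))
  rw [lint_gauss (fun z => ENNReal.ofReal (max z 0 ^ γ) * (gaussianReal 0 1) (Ioi (a*z)))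
    (by exact (measurable_M γ).mul (hanti.comp (measurable_const_mul a)))]
  have hpt : ∀ z : ℝ, gaussianPDF 0 1 z *
        (ENNReal.ofReal (max z 0 ^ γ) * (gaussianReal 0 1) (Ioi (a*z)))
      = (Ioi (0:ℝ)).indicator (fun z => gaussianPDF 0 1 z *
          (ENNReal.ofReal (z ^ γ) * (gaussianReal 0 1) (Ioi (a*z)))) z := by
    intro z
    by_cases hz : z ∈ Ioi (0:ℝ)
    · rw [indicator_of_mem hz, max_eq_left (le_of_lt hz)]
    · rw [indicator_of_notMem hz]
      have hz' : z ≤ 0 := by simpa using hz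
      rw [max_eq_right hz', Real.zero_rpow hγ.ne', ENNReal.ofReal_zero, zero_mul, mul_zero]
  rw [lintegral_congr hpt, lintegral_indicator measurableSet_Ioi]
  have hgr : ∀ z t : ℝ, 0 < z →
      (gaussianPDF 0 1 z * (ENNReal.ofReal (z ^ γ) * ENNReal.ofReal z)) *
          gaussianPDF 0 1 (z*t)
        = ENNReal.ofReal ((2*π)⁻¹ * (z ^ (γ+1) * rexp (-((1+t^2)/2) * z ^ 2))) := by
    intro z t hz
    simp only [gaussianPDF]
    rw [← ENNReal.ofReal_mul (Real.rpow_nonneg hz.le γ),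
      ← ENNReal.ofReal_mul (gaussianPDFReal_nonneg _ _ _),
      ← ENNReal.ofReal_mul (mul_nonneg (gaussianPDFReal_nonneg _ _ _)
        (mul_nonneg (Real.rpow_nonneg hz.le γ) hz.le))]
    congr 1
    calc gaussianPDFReal 0 1 z * (z ^ γ * z) * gaussianPDFReal 0 1 (z*t)
        = (gaussianPDFReal 0 1 z * gaussianPDFReal 0 1 (z*t)) * (z ^ γ * z) := by ring
      _ = ((2*π)⁻¹ * rexp (-((z^2+(z*t)^2)/2))) * (z ^ γ * z) := by rw [gr_mul]
      _ = (2*π)⁻¹ * (z ^ (γ+1) * rexp (-((1+t^2)/2) * z ^ 2)) := by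
          rw [Real.rpow_add_one hz.ne', show -((z^2+(z*t)^2)/2) = -((1+t^2)/2) * z^2 by ring]
          ring
  have hmeasin : Measurable fun w : ℝ => gaussianPDF 0 1 w := measurable_gaussianPDF 0 1
  have hptIoi : ∀ z ∈ Ioi (0:ℝ), gaussianPDF 0 1 z *
        (ENNReal.ofReal (z ^ γ) * (gaussianReal 0 1) (Ioi (a*z)))
      = ∫⁻ t in Ioi a,
          ENNReal.ofReal ((2*π)⁻¹ * (z ^ (γ+1) * rexp (-((1+t^2)/2) * z ^ 2))) ∂volume := by
    intro z hz
    have hz' : (0:ℝ) < z := hz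
    rw [gaussianReal_apply 0 one_ne_zero, show a*z = z*a by ring, scale_Ioi _ hmeasin hz' a]
    calc gaussianPDF 0 1 z * (ENNReal.ofReal (z ^ γ) *
            (ENNReal.ofReal z * ∫⁻ t in Ioi a, gaussianPDF 0 1 (z*t) ∂volume))
        = (gaussianPDF 0 1 z * (ENNReal.ofReal (z ^ γ) * ENNReal.ofReal z)) *
            ∫⁻ t in Ioi a, gaussianPDF 0 1 (z*t) ∂volume := by ring
      _ = ∫⁻ t in Ioi a, (gaussianPDF 0 1 z * (ENNReal.ofReal (z ^ γ) * ENNReal.ofReal z)) *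
            gaussianPDF 0 1 (z*t) ∂volume := by
          rw [lintegral_const_mul _ (by exact hmeasin.comp (measurable_const_mul z) :
            Measurable fun t : ℝ => gaussianPDF 0 1 (z*t))]
      _ = _ := lintegral_congr fun t => hgr z t hz'
  rw [setLIntegral_congr_fun measurableSet_Ioi hptIoi]
  have hjm : Measurable (Function.uncurry fun z t : ℝ =>
      ENNReal.ofReal ((2*π)⁻¹ * (z ^ (γ+1) * rexp (-((1+t^2)/2) * z ^ 2)))) := by
    refine Measurable.ennreal_ofReal ?_
    refine Measurable.const_mul ?_ _
    exact (measurable_fst.pow measurable_const).mul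
      ((((measurable_const.add (measurable_snd.pow measurable_const)).div_const 2).neg.mul
        (measurable_fst.pow measurable_const)).exp)
  rw [lintegral_lintegral_swap hjm.aemeasurable]
  have hin : ∀ t : ℝ, ∫⁻ z in Ioi (0:ℝ),
        ENNReal.ofReal ((2*π)⁻¹ * (z ^ (γ+1) * rexp (-((1+t^2)/2) * z ^ 2))) ∂volume
      = ENNReal.ofReal ((2*π)⁻¹ * (2 ^ ((γ+2)/2) * (1/2) * Real.Gamma ((γ+2)/2)))
          * ENNReal.ofReal ((1+t^2) ^ (-((γ+2)/2))) := by
    intro t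
    have hb : (0:ℝ) < (1+t^2)/2 := by positivity
    simp_rw [ENNReal.ofReal_mul (by positivity : (0:ℝ) ≤ (2*π)⁻¹)]
    have hm2 : Measurable fun z : ℝ => ENNReal.ofReal (z ^ (γ+1) * rexp (-((1+t^2)/2) * z ^ 2)) := by
      exact ((measurable_id.pow measurable_const).mul
        (((measurable_id.pow measurable_const).const_mul _).exp)).ennreal_ofReal
    rw [lintegral_const_mul _ hm2]
    have hInt : IntegrableOn (fun z : ℝ => z ^ (γ+1) * rexp (-((1+t^2)/2) * z ^ 2)) (Ioi 0) :=
      integrableOn_rpow_mul_exp_neg_mul_sq hb (by linarith : (-1:ℝ) < γ+1)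
    have hnn : 0 ≤ᵐ[volume.restrict (Ioi (0:ℝ))]
        fun z : ℝ => z ^ (γ+1) * rexp (-((1+t^2)/2) * z ^ 2) := by
      filter_upwards [ae_restrict_mem measurableSet_Ioi] with z hz
      have : (0:ℝ) < z := hz
      positivity
    rw [← ofReal_integral_eq_lintegral_ofReal hInt hnn]
    have hval : ∫ z in Ioi (0:ℝ), z ^ (γ+1) * rexp (-((1+t^2)/2) * z ^ 2)
        = ((1+t^2)/2) ^ (-(γ+2)/2) * (1/2) * Real.Gamma ((γ+2)/2) := by
      have h := integral_rpow_mul_exp_neg_mul_rpow (two_pos) (by linarith : (-1:ℝ) < γ+1) hb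
      rw [show γ+1+1 = γ+2 by ring] at h
      rw [← h]
      refine setIntegral_congr_fun measurableSet_Ioi fun z hz => ?_
      rw [Real.rpow_two]
    rw [hval]
    have hsplit : ((1+t^2)/2 : ℝ) ^ (-(γ+2)/2)
        = 2 ^ ((γ+2)/2) * (1+t^2) ^ (-((γ+2)/2)) := by
      rw [Real.div_rpow (by positivity) (by norm_num : (0:ℝ) ≤ 2), div_eq_mul_inv,
        ← Real.rpow_neg (by norm_num : (0:ℝ) ≤ 2), neg_div, neg_neg, mul_comm]
    rw [hsplit]
    rw [← ENNReal.ofReal_mul (by positivity), ← ENNReal.ofReal_mul (by positivity),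
      ← ENNReal.ofReal_mul (by positivity)]
    congr 1
    ring
  have hm3 : Measurable fun t : ℝ => ENNReal.ofReal ((1+t^2) ^ (-((γ+2)/2))) := by
    exact ((measurable_const.add (measurable_id.pow measurable_const)).pow
      measurable_const).ennreal_ofReal
  rw [lintegral_congr hin, lintegral_const_mul _ hm3]

lemma gauss_Ici_eq_Ioi (c : ℝ) :
    (gaussianReal 0 1) (Ici c) = (gaussianReal 0 1) (Ioi c) := by
  have hsing : (gaussianReal 0 1) {c} = 0 :=
    gaussianReal_absolutelyContinuous 0 one_ne_zero (volume_singleton)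
  refine le_antisymm ?_ (measure_mono Ioi_subset_Ici_self)
  have hsub : Ici c ⊆ Ioi c ∪ {c} := by
    intro x hx
    rcases eq_or_lt_of_le (show c ≤ x from hx) with h | h
    · exact Or.inr (by simp [h.symm])
    · exact Or.inl h
  calc (gaussianReal 0 1) (Ici c) ≤ (gaussianReal 0 1) (Ioi c ∪ {c}) := measure_mono hsub
    _ ≤ (gaussianReal 0 1) (Ioi c) + (gaussianReal 0 1) {c} := measure_union_le _ _
    _ = (gaussianReal 0 1) (Ioi c) := by rw [hsing, add_zero]

lemma Amin_eq {ρ γ : ℝ} (hρ₁ : -1 < ρ) (hρ₂ : ρ < 1) (hγ : 0 < γ) {vb : ℝ≥0}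
    (hvb : (vb : ℝ) = 1 - ρ ^ 2) :
    ∫⁻ p : ℝ × ℝ, ENNReal.ofReal (max (min p.1 (ρ*p.1 + √(1-ρ^2)*p.2)) 0 ^ γ)
        ∂((gaussianReal 0 1).prod (gaussianReal 0 1))
      = 2 * ∫⁻ z, ENNReal.ofReal (max z 0 ^ γ) *
          (gaussianReal 0 1) (Ioi (((1-ρ)/√(1-ρ^2))*z)) ∂(gaussianReal 0 1) := by
  have h1 : (0:ℝ) < 1 - ρ ^ 2 := by nlinarith
  set b : ℝ := √(1-ρ^2) with hbdef
  have hb : 0 < b := Real.sqrt_pos.2 h1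
  set a : ℝ := (1-ρ)/b with hadef
  set M : ℝ → ℝ≥0∞ := fun t => ENNReal.ofReal (max t 0 ^ γ) with hMdef
  have hMmeas : Measurable M := measurable_M γ
  set S : Set (ℝ × ℝ) := {q : ℝ × ℝ | q.2 < q.1} with hSdef
  have hSmeas : MeasurableSet S := measurableSet_lt measurable_snd measurable_fst
  -- Tonelli
  have hmprod : AEMeasurable (fun p : ℝ × ℝ => ENNReal.ofReal (max (min p.1 (ρ*p.1 + b*p.2)) 0 ^ γ)) ((gaussianReal 0 1).prod (gaussianReal 0 1)) := by
    exact (hMmeas.comp (measurable_fst.min (measurable_g2 ρ b))).aemeasurable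
  rw [lintegral_prod _ hmprod]
  have hiff : ∀ z w : ℝ, (a*z ≤ w) ↔ (z ≤ ρ*z + b*w) := by
    intro z w
    rw [hadef, div_mul_eq_mul_div, div_le_iff₀ hb]
    constructor <;> intro h <;> nlinarith
  have hdecomp : ∀ z w : ℝ, M (min z (ρ*z + b*w))
      = M z * (Ici (a*z)).indicator 1 w + S.indicator 1 (z, ρ*z + b*w) * M (ρ*z + b*w) := by
    intro z w
    simp only [indicator_apply, mem_Ici, hSdef, mem_setOf_eq]
    by_cases h : z ≤ ρ*z + b*w
    · rw [min_eq_left h, if_pos ((hiff z w).2 h), if_neg (not_lt.2 h)]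
      simp
    · push_neg at h
      rw [min_eq_right h.le, if_neg (fun hc => h.not_ge ((hiff z w).1 hc)), if_pos h]
      simp
  have hinner : ∀ z : ℝ, ∫⁻ w, M (min z (ρ*z + b*w)) ∂(gaussianReal 0 1)
      = M z * (gaussianReal 0 1) (Ici (a*z))
        + ∫⁻ y, S.indicator 1 (z, y) * M y ∂(gaussianReal (ρ*z) vb) := by
    intro z
    rw [lintegral_congr (hdecomp z)]
    have hma : Measurable fun w : ℝ => M z * (Ici (a*z)).indicator 1 w := by
      exact measurable_const.mul (measurable_one.indicator measurableSet_Ici)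
    rw [lintegral_add_left hma]
    congr 1
    · have hmi : Measurable ((Ici (a*z)).indicator (1 : ℝ → ℝ≥0∞)) := by
        exact measurable_one.indicator measurableSet_Ici
      rw [lintegral_const_mul _ hmi, lintegral_indicator_one measurableSet_Ici]
    · have hm : Measurable fun y : ℝ => S.indicator 1 (z, y) * M y := by
        exact (((measurable_one.indicator hSmeas)).comp
          (measurable_const.prodMk measurable_id)).mul hMmeas
      rw [← map_affine hρ₁ hρ₂ hvb z, lintegral_map hm (by fun_prop)]
  have hred : ∫⁻ x, ∫⁻ y, ENNReal.ofReal
        ((min (x, y).1 (ρ*(x, y).1 + b*(x, y).2) ⊔ 0) ^ γ) ∂(gaussianReal 0 1) ∂(gaussianReal 0 1)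
      = ∫⁻ z, ∫⁻ w, M (min z (ρ*z + b*w)) ∂(gaussianReal 0 1) ∂(gaussianReal 0 1) := rfl
  rw [hred, lintegral_congr hinner]
  have hanti : Measurable fun c : ℝ => (gaussianReal 0 1) (Ici c) :=
    Antitone.measurable (fun i j hij => measure_mono (Ici_subset_Ici.2 hij))
  have hmb : Measurable fun z : ℝ => M z * (gaussianReal 0 1) (Ici (a*z)) := by
    exact hMmeas.mul (hanti.comp (measurable_const_mul a))
  rw [lintegral_add_left hmb]
  have hmix : ∫⁻ z, ∫⁻ y, S.indicator 1 (z, y) * M y ∂(gaussianReal (ρ*z) vb)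
        ∂(gaussianReal 0 1)
      = ∫⁻ y, M y * (gaussianReal 0 1) (Ioi (a*y)) ∂(gaussianReal 0 1) := by
    rw [mixture hρ₁ hρ₂ hvb (fun z y => S.indicator 1 (z, y) * M y)
      (by exact ((measurable_one.indicator hSmeas)).mul (hMmeas.comp measurable_snd))]
    refine lintegral_congr fun y => ?_
    have hpt : ∀ z : ℝ, S.indicator 1 (z, y) * M y = M y * (Ioi y).indicator 1 z := by
      intro z
      simp only [indicator_apply, hSdef, mem_setOf_eq, mem_Ioi]
      by_cases h : y < z <;> simp [h, mul_comm]
    have hmj : Measurable ((Ioi y).indicator (1 : ℝ → ℝ≥0∞)) := by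
      exact measurable_one.indicator measurableSet_Ioi
    rw [lintegral_congr hpt, lintegral_const_mul _ hmj,
      lintegral_indicator_one measurableSet_Ioi]
    congr 1
    rw [← map_affine hρ₁ hρ₂ hvb y, Measure.map_apply (by fun_prop) measurableSet_Ioi]
    congr 1
    ext w
    simp only [mem_preimage, mem_Ioi]
    rw [hadef, div_mul_eq_mul_div, div_lt_iff₀ hb]
    constructor <;> intro h <;> nlinarith
  rw [hmix]
  have hIci : ∀ z : ℝ, M z * (gaussianReal 0 1) (Ici (a*z))
      = M z * (gaussianReal 0 1) (Ioi (a*z)) := fun z => by rw [gauss_Ici_eq_Ioi]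
  rw [lintegral_congr hIci, two_mul]

lemma partA {Ω : Type*} [MeasurableSpace Ω] (P : Measure Ω) [IsProbabilityMeasure P]
    {γ : ℝ} (hγ : 0 < γ) (R V : Ω → ℝ) (hR : Measurable R) (hV : Measurable V)
    (hInd : IndepFun R V P)
    (hRtail : ∀ x : ℝ, 1 ≤ x → (P {ω | x < R ω}).toReal = x ^ (-γ))
    (hRlow : ∀ x : ℝ, x < 1 → (P {ω | x < R ω}).toReal = 1)
    {x : ℝ} (hx : 1 ≤ x) :
    P {ω | x < R ω * V ω}
      = ENNReal.ofReal (x ^ (-γ)) *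
        ∫⁻ z, ENNReal.ofReal (min (max z 0) x ^ γ) ∂(P.map V) := by
  have hx0 : (0:ℝ) < x := lt_of_lt_of_le one_pos hx
  have hPmapV : IsProbabilityMeasure (P.map V) := Measure.isProbabilityMeasure_map hV.aemeasurable
  have hPmapR : IsProbabilityMeasure (P.map R) := Measure.isProbabilityMeasure_map hR.aemeasurable
  have hprod : P.map (fun ω => (V ω, R ω)) = (P.map V).prod (P.map R) :=
    (indepFun_iff_map_prod_eq_prod_map_map hV.aemeasurable hR.aemeasurable).1 hInd.symm
  have hset : MeasurableSet {p : ℝ × ℝ | x < p.2 * p.1} :=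
    measurableSet_lt measurable_const (measurable_snd.mul measurable_fst)
  have h0 : P {ω | x < R ω * V ω}
      = (P.map (fun ω => (V ω, R ω))) {p : ℝ × ℝ | x < p.2 * p.1} := by
    rw [Measure.map_apply (hV.prodMk hR) hset]
    rfl
  rw [h0, hprod, Measure.prod_apply hset]
  have hmz : ∀ z : ℝ, MeasurableSet {r : ℝ | x < r * z} :=
    fun z => measurableSet_lt measurable_const (measurable_id.mul_const z)
  have hslice : ∀ z : ℝ, (P.map R) (Prod.mk z ⁻¹' {p : ℝ × ℝ | x < p.2 * p.1})
      = ENNReal.ofReal (x ^ (-γ) * min (max z 0) x ^ γ) := by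
    intro z
    have hpre : Prod.mk z ⁻¹' {p : ℝ × ℝ | x < p.2 * p.1} = {r : ℝ | x < r * z} := rfl
    rw [hpre, Measure.map_apply hR (hmz z)]
    have hpre2 : R ⁻¹' {r : ℝ | x < r * z} = {ω | x < R ω * z} := rfl
    rw [hpre2]
    rcases le_or_gt z 0 with hz | hz
    · have hmax : max z 0 = 0 := max_eq_right hz
      have h00 : P {ω | x < R ω * z} = 0 := by
        have hsub : {ω | x < R ω * z} ⊆ {ω | (0:ℝ) < R ω}ᶜ := by
          intro ω hω
          simp only [mem_compl_iff, mem_setOf_eq, not_lt] at *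
          by_contra hc
          push_neg at hc
          nlinarith
        have hone : P {ω | (0:ℝ) < R ω} = 1 := by
          rw [← ENNReal.toReal_eq_one_iff]
          exact hRlow 0 one_pos
        have hcompl : P {ω | (0:ℝ) < R ω}ᶜ = 0 := by
          rw [measure_compl (measurableSet_lt measurable_const hR) (measure_ne_top _ _), hone,
            measure_univ, tsub_self]
        exact le_antisymm ((measure_mono hsub).trans hcompl.le) zero_le
      rw [h00, hmax, min_eq_left hx0.le, Real.zero_rpow hγ.ne', mul_zero, ENNReal.ofReal_zero]
    · have hset2 : {ω | x < R ω * z} = {ω | x / z < R ω} := by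
        ext ω
        simp only [mem_setOf_eq]
        rw [div_lt_iff₀ hz]
      rw [hset2]
      have hmax : max z 0 = z := max_eq_left hz.le
      rcases le_or_gt z x with hzx | hzx
      · have h1z : (1:ℝ) ≤ x / z := (one_le_div hz).2 hzx
        have hP : P {ω | x / z < R ω} = ENNReal.ofReal ((x/z) ^ (-γ)) := by
          rw [← hRtail (x/z) h1z, ENNReal.ofReal_toReal (measure_ne_top _ _)]
        rw [hP, hmax, min_eq_left hzx]
        congr 1
        rw [Real.div_rpow hx0.le hz.le, Real.rpow_neg hz.le, div_eq_mul_inv, inv_inv]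
      · have hlt1 : x / z < 1 := (div_lt_one hz).2 hzx
        have hP : P {ω | x / z < R ω} = 1 := by
          rw [← ENNReal.toReal_eq_one_iff]
          exact hRlow _ hlt1
        rw [hP, hmax, min_eq_right hzx.le, ← Real.rpow_add hx0, neg_add_cancel,
          Real.rpow_zero, ENNReal.ofReal_one]
  rw [lintegral_congr hslice]
  simp_rw [ENNReal.ofReal_mul (Real.rpow_nonneg hx0.le _)]
  rw [lintegral_const_mul _ (measurable_Mcap γ x)]

lemma partLimit (ν : Measure ℝ) [IsProbabilityMeasure ν] {γ : ℝ} (hγ : 0 < γ)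
    (hfin : ∫⁻ z, ENNReal.ofReal (max z 0 ^ γ) ∂ν ≠ ∞) :
    Tendsto (fun x : ℝ => (∫⁻ z, ENNReal.ofReal (min (max z 0) x ^ γ) ∂ν).toReal) atTop
      (nhds ((∫⁻ z, ENNReal.ofReal (max z 0 ^ γ) ∂ν).toReal)) := by
  set A := ∫⁻ z, ENNReal.ofReal (max z 0 ^ γ) ∂ν with hA
  set N : ℝ → ℝ≥0∞ := fun x => ∫⁻ z, ENNReal.ofReal (min (max z 0) x ^ γ) ∂ν with hN
  set μ' := ν.withDensity (fun z => ENNReal.ofReal (max z 0 ^ γ)) with hμ'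
  have hμA : ∀ x : ℝ, μ' (Ioi x) = ∫⁻ z in Ioi x, ENNReal.ofReal (max z 0 ^ γ) ∂ν :=
    fun x => withDensity_apply _ measurableSet_Ioi
  have hμfin : ∀ x : ℝ, μ' (Ioi x) ≠ ∞ := by
    intro x
    rw [hμA]
    exact ((setLIntegral_le_lintegral _ _).trans_lt hfin.lt_top).ne
  have hNleA : ∀ x : ℝ, 0 ≤ x → N x ≤ A := by
    intro x hx
    refine lintegral_mono fun z => ENNReal.ofReal_le_ofReal ?_
    exact Real.rpow_le_rpow (le_min (le_max_right z 0) hx) (min_le_left _ _) hγ.le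
  have hAle : ∀ x : ℝ, 0 ≤ x → A ≤ N x + μ' (Ioi x) := by
    intro x hx
    rw [hμA, ← lintegral_indicator measurableSet_Ioi,
      ← lintegral_add_left (measurable_Mcap γ x)]
    refine lintegral_mono fun z => ?_
    rcases le_or_gt z x with hzx | hzx
    · rw [min_eq_left (max_le hzx hx)]
      exact self_le_add_right _ _
    · have hmem : z ∈ Ioi x := hzx
      rw [indicator_of_mem hmem]
      exact le_add_self
  have h0 : Tendsto (fun x : ℝ => μ' (Ioi x)) atTop (nhds 0) := by
    have h := tendsto_measure_iInter_atTop (μ := μ') (s := fun x : ℝ => Ioi x)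
      (fun _ => measurableSet_Ioi.nullMeasurableSet) (fun i j hij => Ioi_subset_Ioi hij)
      ⟨0, hμfin 0⟩
    have hempty : ⋂ x : ℝ, Ioi x = (∅ : Set ℝ) := by
      ext y
      simp only [mem_iInter, mem_Ioi, mem_empty_iff_false, iff_false, not_forall, not_lt]
      exact ⟨y, le_rfl⟩
    rw [hempty, measure_empty] at h
    exact h
  have h1 : Tendsto (fun x : ℝ => A.toReal - (μ' (Ioi x)).toReal) atTop (nhds A.toReal) := by
    have h2 : Tendsto (fun x : ℝ => (μ' (Ioi x)).toReal) atTop (nhds 0) := by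
      have := (ENNReal.tendsto_toReal (by simp : (0:ℝ≥0∞) ≠ ∞)).comp h0
      rw [ENNReal.toReal_zero] at this; exact this
    simpa using tendsto_const_nhds.sub h2
  refine tendsto_of_tendsto_of_tendsto_of_le_of_le' h1 tendsto_const_nhds ?_ ?_
  · filter_upwards [eventually_ge_atTop (0:ℝ)] with x hx
    have hNfin : N x ≠ ∞ := ((hNleA x hx).trans_lt hfin.lt_top).ne
    have h3 : A.toReal ≤ (N x).toReal + (μ' (Ioi x)).toReal := by
      have h4 := ENNReal.toReal_mono (ENNReal.add_ne_top.2 ⟨hNfin, hμfin x⟩) (hAle x hx)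
      rwa [ENNReal.toReal_add hNfin (hμfin x)] at h4
    linarith
  · filter_upwards [eventually_ge_atTop (0:ℝ)] with x hx
    exact ENNReal.toReal_mono hfin (hNleA x hx)

lemma survival_eq {γ : ℝ} (hγ : 0 < γ) (a : ℝ) :
    studentTSurvival (γ+1) (√(γ+1) * a)
      = √(γ+1) * ((Real.Gamma ((γ+2)/2) / (√((γ+1)*π) * Real.Gamma ((γ+1)/2)))
          * ∫ t in Ioi a, (1+t^2) ^ (-((γ+2)/2)) ∂volume) := by
  have hd : (0:ℝ) < γ+1 := by linarith
  have hsd : (0:ℝ) < √(γ+1) := Real.sqrt_pos.2 hd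
  have h := integral_comp_mul_left_Ioi (studentTPdf (γ+1)) a hsd
  have hpt : ∀ t : ℝ, studentTPdf (γ+1) (√(γ+1) * t)
      = Real.Gamma ((γ+2)/2) / (√((γ+1)*π) * Real.Gamma ((γ+1)/2))
          * (1+t^2) ^ (-((γ+2)/2)) := by
    intro t
    simp only [studentTPdf]
    rw [show (√(γ+1)*t)^2 = (γ+1)*t^2 by rw [mul_pow, Real.sq_sqrt hd.le],
      show (γ+1)*t^2/(γ+1) = t^2 by field_simp, show (γ+1+1) = γ+2 by ring]
  have h2 : studentTSurvival (γ+1) (√(γ+1)*a)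
      = √(γ+1) * ∫ x in Ioi a, studentTPdf (γ+1) (√(γ+1)*x) := by
    simp only [studentTSurvival]
    rw [h, smul_eq_mul, ← mul_assoc, mul_inv_cancel₀ hsd.ne', one_mul]
  rw [h2]
  congr 1
  simp_rw [hpt]
  rw [integral_const_mul]

lemma const_eq {γ : ℝ} (hγ : 0 < γ) :
    (2*π)⁻¹ * (2 ^ ((γ+2)/2) * (1/2) * Real.Gamma ((γ+2)/2))
      = ((√(2*π))⁻¹ * ((2⁻¹:ℝ) ^ (-(γ+1)/2) * (1/2) * Real.Gamma ((γ+1)/2)))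
        * (√(γ+1) * (Real.Gamma ((γ+2)/2) / (√((γ+1)*π) * Real.Gamma ((γ+1)/2)))) := by
  have hd : (0:ℝ) < γ+1 := by linarith
  have hG1 : 0 < Real.Gamma ((γ+1)/2) := Real.Gamma_pos_of_pos (by positivity)
  have h2half : (2:ℝ) ^ ((γ+2)/2) = 2 ^ ((γ+1)/2) * √2 := by
    rw [show (γ+2)/2 = (γ+1)/2 + 1/2 by ring, Real.rpow_add two_pos,
      ← Real.sqrt_eq_rpow]
  have hinv : ((2⁻¹:ℝ)) ^ (-(γ+1)/2) = 2 ^ ((γ+1)/2) := by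
    rw [Real.inv_rpow (by norm_num : (0:ℝ) ≤ 2), neg_div, Real.rpow_neg (by norm_num), inv_inv]
  have hs2π : √(2*π) = √2 * √π := Real.sqrt_mul (by norm_num) π
  have hsdπ : √((γ+1)*π) = √(γ+1) * √π := Real.sqrt_mul hd.le π
  have h2ππ : (2:ℝ)*π = (√2*√2) * (√π*√π) := by
    rw [Real.mul_self_sqrt (by norm_num : (0:ℝ) ≤ 2), Real.mul_self_sqrt Real.pi_pos.le]
  rw [h2half, hinv, hs2π, hsdπ, h2ππ]
  have hs2 : (0:ℝ) < √2 := Real.sqrt_pos.2 (by norm_num)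
  have hsπ : (0:ℝ) < √π := Real.sqrt_pos.2 Real.pi_pos
  have hsd : (0:ℝ) < √(γ+1) := Real.sqrt_pos.2 hd
  field_simp

end HotAux

open Set Real
open scoped ENNReal NNReal

/-- (χ of the HOT model when β = 0.) Let `Z₁, Z₀` be independent
standard normals, `Z₂ = ρ Z₁ + √(1-ρ²) Z₀` for ρ ∈ (-1,1), and let `R` be Pareto(γ)
(γ > 0), independent of `(Z₁, Z₀)`. With `W i = R·Z i`,
`P(W₁ > x and W₂ > x) / P(W₂ > x) → 2·T̄_{γ+1}(√((γ+1)(1-ρ)/(1+ρ)))` as `x → ∞`. -/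
theorem hot_model_chi_AD
    {Ω : Type*} [MeasurableSpace Ω] (P : Measure Ω) [IsProbabilityMeasure P]
    (γ ρ : ℝ) (hγ : 0 < γ) (hρ₁ : -1 < ρ) (hρ₂ : ρ < 1)
    (Z₁ Z₀ R : Ω → ℝ)
    (hZ₁meas : Measurable Z₁) (hZ₀meas : Measurable Z₀) (hRmeas : Measurable R)
    (hZ₁ : Measure.map Z₁ P = gaussianReal 0 1)
    (hZ₀ : Measure.map Z₀ P = gaussianReal 0 1)
    (hZindep : IndepFun Z₁ Z₀ P)
    (hRindep : IndepFun R (fun ω => (Z₁ ω, Z₀ ω)) P)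
    (hRtail : ∀ x : ℝ, 1 ≤ x → (P {ω | x < R ω}).toReal = x ^ (-γ))
    (hRlow : ∀ x : ℝ, x < 1 → (P {ω | x < R ω}).toReal = 1)
    (Z₂ W₁ W₂ : Ω → ℝ)
    (hZ₂ : ∀ ω, Z₂ ω = ρ * Z₁ ω + Real.sqrt (1 - ρ ^ 2) * Z₀ ω)
    (hW₁ : ∀ ω, W₁ ω = R ω * Z₁ ω) (hW₂ : ∀ ω, W₂ ω = R ω * Z₂ ω) :
    Tendsto (fun x : ℝ =>
        (P {ω | x < W₁ ω ∧ x < W₂ ω}).toReal / (P {ω | x < W₂ ω}).toReal)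
      atTop
      (nhds (2 * studentTSurvival (γ + 1) (Real.sqrt ((γ + 1) * (1 - ρ) / (1 + ρ))))) := by
  
  classical
  have h1 : (0:ℝ) < 1 - ρ ^ 2 := by nlinarith
  set b : ℝ := √(1 - ρ ^ 2) with hbdef
  have hb : 0 < b := Real.sqrt_pos.2 h1
  set vb : ℝ≥0 := ⟨1 - ρ^2, h1.le⟩ with hvbdef
  have hvb : (vb : ℝ) = 1 - ρ ^ 2 := rfl
  set a : ℝ := (1-ρ)/b with hadef
  set gm : ℝ × ℝ → ℝ := fun p => min p.1 (ρ * p.1 + b * p.2) with hgmdef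
  have hgm : Measurable gm := measurable_fst.min (HotAux.measurable_g2 ρ b)
  have hpairmeas : Measurable fun ω => (Z₁ ω, Z₀ ω) := hZ₁meas.prodMk hZ₀meas
  have hpair : P.map (fun ω => (Z₁ ω, Z₀ ω))
      = (gaussianReal 0 1).prod (gaussianReal 0 1) := by
    have h := (indepFun_iff_map_prod_eq_prod_map_map hZ₁meas.aemeasurable
      hZ₀meas.aemeasurable).1 hZindep
    rw [hZ₁, hZ₀] at h
    exact h
  have hZ₂fun : Z₂ = (fun p : ℝ × ℝ => ρ * p.1 + b * p.2) ∘ (fun ω => (Z₁ ω, Z₀ ω)) :=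
    funext fun ω => hZ₂ ω
  have hZ₂meas : Measurable Z₂ := by
    rw [hZ₂fun]; exact (HotAux.measurable_g2 ρ b).comp hpairmeas
  have hmapZ₂ : P.map Z₂ = gaussianReal 0 1 := by
    have h := HotAux.map_g2 hρ₁ hρ₂ hvb
    rw [← hbdef] at h
    rw [hZ₂fun, ← Measure.map_map (HotAux.measurable_g2 ρ b) hpairmeas, hpair, h]
  set Vm : Ω → ℝ := fun ω => min (Z₁ ω) (Z₂ ω) with hVmdef
  have hVmfun : Vm = gm ∘ (fun ω => (Z₁ ω, Z₀ ω)) := funext fun ω => by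
    simp only [hVmdef, hgmdef, Function.comp_apply, hZ₂ ω]
  have hVmmeas : Measurable Vm := by rw [hVmfun]; exact hgm.comp hpairmeas
  have hmapVm : P.map Vm = ((gaussianReal 0 1).prod (gaussianReal 0 1)).map gm := by
    rw [hVmfun, ← Measure.map_map hgm hpairmeas, hpair]
  -- key integral identities
  have hAmin : ∫⁻ z, ENNReal.ofReal (max z 0 ^ γ) ∂(P.map Vm)
      = 2 * ∫⁻ z, ENNReal.ofReal (max z 0 ^ γ) * (gaussianReal 0 1) (Ioi (a*z))
          ∂(gaussianReal 0 1) := by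
    rw [hmapVm, lintegral_map (HotAux.measurable_M γ) hgm]
    have h := HotAux.Amin_eq hρ₁ hρ₂ hγ hvb
    rw [← hbdef, ← hadef] at h
    exact h
  have hAZ : ∫⁻ z, ENNReal.ofReal (max z 0 ^ γ) ∂(P.map Z₂)
      = ENNReal.ofReal ((√(2*π))⁻¹ *
          ((2⁻¹:ℝ) ^ (-(γ+1)/2) * (1/2) * Real.Gamma ((γ+1)/2))) := by
    rw [hmapZ₂]; exact HotAux.c2_eq hγ
  have hG1 : 0 < Real.Gamma ((γ+1)/2) := Real.Gamma_pos_of_pos (by positivity)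
  have hG2 : 0 < Real.Gamma ((γ+2)/2) := Real.Gamma_pos_of_pos (by positivity)
  have hC2pos : 0 < (√(2*π))⁻¹ * ((2⁻¹:ℝ) ^ (-(γ+1)/2) * (1/2) * Real.Gamma ((γ+1)/2)) := by
    have h2 : (0:ℝ) < (√(2*π))⁻¹ := by positivity
    have h3 : (0:ℝ) < (2⁻¹:ℝ) ^ (-(γ+1)/2) := Real.rpow_pos_of_pos (by norm_num) _
    exact mul_pos h2 (mul_pos (mul_pos h3 (by norm_num)) hG1)
  have hC0pos : 0 < (2*π)⁻¹ * (2 ^ ((γ+2)/2) * (1/2) * Real.Gamma ((γ+2)/2)) := by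
    have h2 : (0:ℝ) < (2*π)⁻¹ := by positivity
    have h3 : (0:ℝ) < (2:ℝ) ^ ((γ+2)/2) := Real.rpow_pos_of_pos (by norm_num) _
    exact mul_pos h2 (mul_pos (mul_pos h3 (by norm_num)) hG2)
  have hJle : (∫⁻ z, ENNReal.ofReal (max z 0 ^ γ) * (gaussianReal 0 1) (Ioi (a*z))
        ∂(gaussianReal 0 1)) ≤ ENNReal.ofReal ((√(2*π))⁻¹ *
          ((2⁻¹:ℝ) ^ (-(γ+1)/2) * (1/2) * Real.Gamma ((γ+1)/2))) := by
    rw [← HotAux.c2_eq hγ]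
    refine lintegral_mono fun z => ?_
    calc ENNReal.ofReal (max z 0 ^ γ) * (gaussianReal 0 1) (Ioi (a*z))
        ≤ ENNReal.ofReal (max z 0 ^ γ) * 1 := mul_le_mul_right prob_le_one _
      _ = ENNReal.ofReal (max z 0 ^ γ) := mul_one _
  have hJfin : (∫⁻ z, ENNReal.ofReal (max z 0 ^ γ) * (gaussianReal 0 1) (Ioi (a*z))
      ∂(gaussianReal 0 1)) ≠ ∞ := (hJle.trans_lt ENNReal.ofReal_lt_top).ne
  have hfinVm : ∫⁻ z, ENNReal.ofReal (max z 0 ^ γ) ∂(P.map Vm) ≠ ∞ := by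
    rw [hAmin]
    exact ENNReal.mul_ne_top (by simp) hJfin
  have hfinZ : ∫⁻ z, ENNReal.ofReal (max z 0 ^ γ) ∂(P.map Z₂) ≠ ∞ := by
    rw [hAZ]; exact ENNReal.ofReal_ne_top
  haveI : IsProbabilityMeasure (P.map Vm) := Measure.isProbabilityMeasure_map hVmmeas.aemeasurable
  haveI : IsProbabilityMeasure (P.map Z₂) := Measure.isProbabilityMeasure_map hZ₂meas.aemeasurable
  have hNum := HotAux.partLimit (P.map Vm) hγ hfinVm
  have hDen := HotAux.partLimit (P.map Z₂) hγ hfinZ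
  -- independence
  have hIndZ₂ : IndepFun R Z₂ P := by
    rw [hZ₂fun]
    exact hRindep.comp measurable_id (HotAux.measurable_g2 ρ b)
  have hIndVm : IndepFun R Vm P := by
    rw [hVmfun]
    exact hRindep.comp measurable_id hgm
  -- a.e. positivity of R
  have hone : P {ω | (0:ℝ) < R ω} = 1 := by
    rw [← ENNReal.toReal_eq_one_iff]; exact hRlow 0 one_pos
  have hae : ∀ᵐ ω ∂P, 0 < R ω := by
    rw [ae_iff]
    have hc : {ω | ¬ (0:ℝ) < R ω} = {ω | (0:ℝ) < R ω}ᶜ := rfl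
    rw [hc, measure_compl (measurableSet_lt measurable_const hRmeas) (measure_ne_top _ _),
      hone, measure_univ, tsub_self]
  have hnum_ev : ∀ x : ℝ, P {ω | x < W₁ ω ∧ x < W₂ ω} = P {ω | x < R ω * Vm ω} := by
    intro x
    refine measure_congr ?_
    rw [Filter.eventuallyEq_set]
    filter_upwards [hae] with ω hω
    simp only [mem_setOf_eq, hW₁ ω, hW₂ ω, hVmdef]
    rw [mul_min_of_nonneg _ _ hω.le, lt_min_iff]
  have hden_ev : ∀ x : ℝ, {ω | x < W₂ ω} = {ω | x < R ω * Z₂ ω} := fun x => by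
    ext ω; simp only [mem_setOf_eq, hW₂ ω]
  have hev : ∀ᶠ x : ℝ in atTop,
      (P {ω | x < W₁ ω ∧ x < W₂ ω}).toReal / (P {ω | x < W₂ ω}).toReal
        = (∫⁻ z, ENNReal.ofReal (min (max z 0) x ^ γ) ∂(P.map Vm)).toReal
          / (∫⁻ z, ENNReal.ofReal (min (max z 0) x ^ γ) ∂(P.map Z₂)).toReal := by
    filter_upwards [eventually_ge_atTop (1:ℝ)] with x hx
    have hx0 : (0:ℝ) < x := lt_of_lt_of_le one_pos hx
    rw [hnum_ev x, hden_ev x,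
      HotAux.partA P hγ R Vm hRmeas hVmmeas hIndVm hRtail hRlow hx,
      HotAux.partA P hγ R Z₂ hRmeas hZ₂meas hIndZ₂ hRtail hRlow hx,
      ENNReal.toReal_mul, ENNReal.toReal_mul,
      ENNReal.toReal_ofReal (Real.rpow_nonneg hx0.le _),
      mul_div_mul_left _ _ (ne_of_gt (Real.rpow_pos_of_pos hx0 _))]
  have hC2ne : ((∫⁻ z, ENNReal.ofReal (max z 0 ^ γ) ∂(P.map Z₂)).toReal) ≠ 0 := by
    rw [hAZ, ENNReal.toReal_ofReal hC2pos.le]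
    exact ne_of_gt hC2pos
  have hlim := hNum.div hDen hC2ne
  have hs : √((γ+1)*(1-ρ)/(1+ρ)) = √(γ+1) * a := by
    have h1ρ : (0:ℝ) < 1 + ρ := by linarith
    have h1ρ' : (0:ℝ) ≤ 1 - ρ := by linarith
    rw [hadef, hbdef, show (γ+1)*(1-ρ)/(1+ρ) = (γ+1) * ((1-ρ)/(1+ρ)) by ring,
      Real.sqrt_mul (by linarith : (0:ℝ) ≤ γ+1)]
    congr 1
    rw [eq_div_iff (ne_of_gt (Real.sqrt_pos.2 h1)),
      ← Real.sqrt_mul (div_nonneg h1ρ' h1ρ.le),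
      show (1-ρ)/(1+ρ) * (1-ρ^2) = (1-ρ)^2 by field_simp; ring,
      Real.sqrt_sq h1ρ']
  have hvalue : (∫⁻ z, ENNReal.ofReal (max z 0 ^ γ) ∂(P.map Vm)).toReal
      / (∫⁻ z, ENNReal.ofReal (max z 0 ^ γ) ∂(P.map Z₂)).toReal
      = 2 * studentTSurvival (γ + 1) (√((γ + 1) * (1 - ρ) / (1 + ρ))) := by
    rw [hAmin, hAZ, HotAux.J_eq hγ a]
    have hItR : (∫⁻ t in Ioi a, ENNReal.ofReal ((1+t^2) ^ (-((γ+2)/2))) ∂volume).toReal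
        = ∫ t in Ioi a, (1+t^2) ^ (-((γ+2)/2)) ∂volume := by
      rw [integral_eq_lintegral_of_nonneg_ae (f := fun t : ℝ => (1+t^2) ^ (-((γ+2)/2)))
        (ae_of_all _ fun t => Real.rpow_nonneg (by positivity) _)
        ((Continuous.rpow_const (continuous_const.add (continuous_pow 2))
          (fun t => Or.inl (ne_of_gt (by positivity : (0:ℝ) < 1 + t^2)))).aestronglyMeasurable)]
    rw [ENNReal.toReal_mul, ENNReal.toReal_mul, ENNReal.toReal_ofReal hC0pos.le,
      ENNReal.toReal_ofReal hC2pos.le, hItR, hs, HotAux.survival_eq hγ a,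
      HotAux.const_eq hγ]
    rw [show ((2:ℝ≥0∞)).toReal = 2 by simp]
    rw [div_eq_iff (ne_of_gt hC2pos)]
    ring
  rw [← hvalue]
  exact Filter.Tendsto.congr' (hev.mono fun x h => h.symm) hlim
end

section
/- Let Z_1 and Z_0 be independent standard normal random variables and, for ρ ∈ (−1, 1), set Z_2 = ρ Z_1 + √(1 − ρ²) Z_0, so that (Z_1, Z_2) is bivariate standard Gaussian with correlation ρ. Let β > 0, γ > 0, let R be a Weibull-type(β,γ) random variable independent of (Z_1, Z_0), and set W_i = R·Z_i for i = 1, 2. Then lim_{x→∞} P(W_1 > x and W_2 > x) / P(W_2 > x) = 0; that is, the pair (W_1, W_2) is asymptotically independent (χ = 0). -/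
open MeasureTheory ProbabilityTheory Filter Real Set
open scoped ENNReal NNReal

lemma gaussPDF01 (x : ℝ) :
    gaussianPDFReal 0 1 x = Real.exp (-x^2/2) / Real.sqrt (2*Real.pi) := by
  simp only [gaussianPDFReal, NNReal.coe_one, mul_one, sub_zero]
  ring

lemma gauss_set_lb {s : Set ℝ} (a m : ℝ)
    (hsub : Set.Ioc a (a+1) ⊆ s)
    (hpdf : ∀ x ∈ Set.Ioc a (a+1), m ≤ gaussianPDFReal 0 1 x) :
    m ≤ (gaussianReal 0 1 s).toReal := by
  have hν : gaussianReal 0 1 = (volume : Measure ℝ).withDensity (gaussianPDF 0 1) :=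
    gaussianReal_of_var_ne_zero 0 one_ne_zero
  have h1 : ENNReal.ofReal m ≤ gaussianReal 0 1 s := by
    calc ENNReal.ofReal m
        = ENNReal.ofReal m * volume (Set.Ioc a (a+1)) := by
          rw [Real.volume_Ioc]
          norm_num
      _ = ∫⁻ _ in Set.Ioc a (a+1), ENNReal.ofReal m ∂volume := by
          rw [setLIntegral_const]
      _ ≤ ∫⁻ x in Set.Ioc a (a+1), gaussianPDF 0 1 x ∂volume := by
          refine setLIntegral_mono (measurable_gaussianPDF 0 1) (fun x hx => ?_)
          exact ENNReal.ofReal_le_ofReal (hpdf x hx)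
      _ = gaussianReal 0 1 (Set.Ioc a (a+1)) := by
          rw [hν, withDensity_apply _ measurableSet_Ioc]
      _ ≤ gaussianReal 0 1 s := measure_mono hsub
  exact (ENNReal.ofReal_le_iff_le_toReal (measure_ne_top _ _)).mp h1

lemma gauss_Ioi_lb {w : ℝ} (hw : 0 ≤ w) :
    Real.exp (-(w+1)^2/2) / Real.sqrt (2*Real.pi) ≤ (gaussianReal 0 1 (Set.Ioi w)).toReal := by
  refine gauss_set_lb w _ Set.Ioc_subset_Ioi_self (fun x hx => ?_)
  rw [gaussPDF01]
  have h2 : (0:ℝ) < Real.sqrt (2*Real.pi) := Real.sqrt_pos.mpr (by positivity)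
  gcongr Real.exp ?_ / _
  obtain ⟨hx1, hx2⟩ := hx
  nlinarith [lt_of_le_of_lt hw hx1]

lemma gauss_Iic_lb {w : ℝ} (hw : 0 ≤ w) :
    Real.exp (-(w+1)^2/2) / Real.sqrt (2*Real.pi) ≤ (gaussianReal 0 1 (Set.Iic (-w))).toReal := by
  refine gauss_set_lb (-(w+1)) _ ?_ (fun x hx => ?_)
  · intro x hx
    simp only [Set.mem_Ioc, Set.mem_Iic] at *
    linarith [hx.2]
  · rw [gaussPDF01]
    have h2 : (0:ℝ) < Real.sqrt (2*Real.pi) := Real.sqrt_pos.mpr (by positivity)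
    gcongr Real.exp ?_ / _
    obtain ⟨hx1, hx2⟩ := hx
    nlinarith

lemma gauss_exp_identity (u x : ℝ) :
    gaussianPDFReal 0 1 x * Real.exp (u * x)
      = Real.exp (u^2/2) * gaussianPDFReal u 1 x := by
  simp only [gaussianPDFReal, NNReal.coe_one, mul_one, sub_zero]
  rw [mul_comm (Real.exp (u^2/2))]
  rw [mul_assoc, mul_assoc, ← Real.exp_add, ← Real.exp_add]
  congr 1
  ring

lemma std_gaussian_mgf {Ω : Type*} [MeasurableSpace Ω] (P : Measure Ω) [IsProbabilityMeasure P]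
    {X : Ω → ℝ} (hm : Measurable X) (hX : Measure.map X P = gaussianReal 0 1) (u : ℝ) :
    Integrable (fun ω => Real.exp (u * X ω)) P ∧ mgf X P u = Real.exp (u^2/2) := by
  have hν : gaussianReal 0 1 = (volume : Measure ℝ).withDensity (gaussianPDF 0 1) :=
    gaussianReal_of_var_ne_zero 0 one_ne_zero
  have hd : gaussianPDF 0 1 = fun x => ((gaussianPDFReal 0 1 x).toNNReal : ℝ≥0∞) := by
    funext x; rfl
  have hfmeas : Measurable (fun x : ℝ => (gaussianPDFReal 0 1 x).toNNReal) :=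
    (measurable_gaussianPDFReal 0 1).real_toNNReal
  have hsmul : (fun x : ℝ => (gaussianPDFReal 0 1 x).toNNReal • Real.exp (u * x))
      = fun x => Real.exp (u^2/2) * gaussianPDFReal u 1 x := by
    funext x
    rw [NNReal.smul_def, smul_eq_mul, Real.coe_toNNReal _ (gaussianPDFReal_nonneg 0 1 x)]
    exact gauss_exp_identity u x
  have hint_map : Integrable (fun x => Real.exp (u * x)) (gaussianReal 0 1) := by
    rw [hν, hd, integrable_withDensity_iff_integrable_smul hfmeas]
    rw [hsmul]
    exact (integrable_gaussianPDFReal u 1).const_mul _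
  have hint : Integrable (fun ω => Real.exp (u * X ω)) P := by
    have := (integrable_map_measure
      (f := X) (g := fun x => Real.exp (u * x))
      (Continuous.aestronglyMeasurable (by fun_prop)) hm.aemeasurable).mp
      (by rw [hX]; exact hint_map)
    exact this
  refine ⟨hint, ?_⟩
  rw [mgf]
  have h1 : ∫ ω, Real.exp (u * X ω) ∂P = ∫ x, Real.exp (u * x) ∂(Measure.map X P) := by
    rw [integral_map hm.aemeasurable (Continuous.aestronglyMeasurable (by fun_prop))]
  rw [h1, hX, hν, hd, integral_withDensity_eq_integral_smul hfmeas, hsmul,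
    integral_const_mul, integral_gaussianPDFReal_eq_one u one_ne_zero, mul_one]

lemma sum_gauss_chernoff {Ω : Type*} [MeasurableSpace Ω] (P : Measure Ω) [IsProbabilityMeasure P]
    {Z₁ Z₀ : Ω → ℝ} (h1m : Measurable Z₁) (h0m : Measurable Z₀)
    (h1 : Measure.map Z₁ P = gaussianReal 0 1) (h0 : Measure.map Z₀ P = gaussianReal 0 1)
    (hind : IndepFun Z₁ Z₀ P) (c₁ c₂ : ℝ) (hσ : 0 < c₁^2 + c₂^2) {s : ℝ} (hs : 0 ≤ s) :
    (P {ω | s ≤ c₁ * Z₁ ω + c₂ * Z₀ ω}).toReal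
      ≤ Real.exp (-(s^2/(2*(c₁^2+c₂^2)))) := by
  set sig2 := c₁^2 + c₂^2 with hsig2
  set u := s / sig2 with hu
  have hu0 : 0 ≤ u := div_nonneg hs hσ.le
  set X : Ω → ℝ := fun ω => c₁ * Z₁ ω with hXdef
  set Y : Ω → ℝ := fun ω => c₂ * Z₀ ω with hYdef
  have hXint : Integrable (fun ω => Real.exp (u * X ω)) P := by
    have h := (std_gaussian_mgf P h1m h1 (u*c₁)).1
    simpa [hXdef, mul_assoc] using h
  have hYint : Integrable (fun ω => Real.exp (u * Y ω)) P := by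
    have h := (std_gaussian_mgf P h0m h0 (u*c₂)).1
    simpa [hYdef, mul_assoc] using h
  have hXmgf : mgf X P u = Real.exp ((u*c₁)^2/2) := by
    rw [← (std_gaussian_mgf P h1m h1 (u*c₁)).2]
    simp only [mgf, hXdef, mul_assoc]
  have hYmgf : mgf Y P u = Real.exp ((u*c₂)^2/2) := by
    rw [← (std_gaussian_mgf P h0m h0 (u*c₂)).2]
    simp only [mgf, hYdef, mul_assoc]
  have hXY : IndepFun X Y P := hind.comp (measurable_const_mul c₁) (measurable_const_mul c₂)
  have hSint : Integrable (fun ω => Real.exp (u * (X+Y) ω)) P :=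
    hXY.integrable_exp_mul_add hXint hYint
  have key := measure_ge_le_exp_mul_mgf (X := X + Y) (μ := P) s hu0 hSint
  have hadd : mgf (X+Y) P u = mgf X P u * mgf Y P u :=
    hXY.mgf_add' ((h1m.const_mul c₁).aestronglyMeasurable) ((h0m.const_mul c₂).aestronglyMeasurable)
  have hset : {ω | s ≤ c₁ * Z₁ ω + c₂ * Z₀ ω} = {ω | s ≤ (X+Y) ω} := rfl
  rw [hset]
  refine key.trans (le_of_eq ?_)
  rw [hadd, hXmgf, hYmgf, ← Real.exp_add, ← Real.exp_add]
  congr 1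
  rw [hu]
  field_simp
  ring

lemma amgm {β A B u : ℝ} (hβ : 0 < β) (hA : 0 < A) (hB : 0 < B) (hu : 0 < u) :
    (A/(2/(β+2)))^(2/(β+2)) * (B/(β/(β+2)))^(β/(β+2)) ≤ A*u^β + B/u^2 := by
  have hb2 : (0:ℝ) < β+2 := by linarith
  set w₁ := 2/(β+2) with hw₁def
  set w₂ := β/(β+2) with hw₂def
  have hw₁ : 0 < w₁ := by positivity
  have hw₂ : 0 < w₂ := by positivity
  have hsum : w₁ + w₂ = 1 := by rw [hw₁def, hw₂def]; field_simp; ring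
  have huβ : 0 < u ^ β := Real.rpow_pos_of_pos hu β
  have hu2 : (0:ℝ) < u^2 := by positivity
  have h := Real.geom_mean_le_arith_mean2_weighted hw₁.le hw₂.le
      (p₁ := A*u^β/w₁) (p₂ := B/u^2/w₂) (by positivity) (by positivity) hsum
  have hr : w₁ * (A*u^β/w₁) + w₂ * (B/u^2/w₂) = A*u^β + B/u^2 := by
    field_simp
  rw [hr] at h
  refine le_trans (le_of_eq ?_) h
  have hm2 : u ^ (-2:ℝ) = (u^2)⁻¹ := by
    rw [Real.rpow_neg hu.le, show ((2:ℝ)) = ((2:ℕ):ℝ) by norm_num, Real.rpow_natCast]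
  have e1 : A*u^β/w₁ = (A/w₁) * u^β := by ring
  have e2 : B/u^2/w₂ = (B/w₂) * u^(-2:ℝ) := by rw [hm2]; ring
  have hz : β * w₁ + (-2) * w₂ = 0 := by rw [hw₁def, hw₂def]; field_simp; ring
  rw [e1, e2, Real.mul_rpow (by positivity) huβ.le,
    Real.mul_rpow (by positivity) (Real.rpow_nonneg hu.le _),
    ← Real.rpow_mul hu.le, ← Real.rpow_mul hu.le, mul_mul_mul_comm,
    ← Real.rpow_add hu, hz, Real.rpow_zero, mul_one]

lemma exists_cross {f : ℕ → ℝ} {r : ℝ} :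
    ∀ {n : ℕ}, f 0 < r → r ≤ f n → ∃ k, k < n ∧ f k < r ∧ r ≤ f (k+1) := by
  intro n
  induction n with
  | zero => intro h1 h2; exact absurd (lt_of_lt_of_le h1 h2) (lt_irrefl _)
  | succ m ih =>
    intro h1 h2
    rcases le_or_gt r (f m) with h | h
    · obtain ⟨k, hk, hk1, hk2⟩ := ih h1 h
      exact ⟨k, Nat.lt_succ_of_lt hk, hk1, hk2⟩
    · exact ⟨m, Nat.lt_succ_self m, h, h2⟩

set_option maxHeartbeats 1000000 in
lemma hot_ratio_bound
    {Ω : Type*} [MeasurableSpace Ω] (P : Measure Ω) [IsProbabilityMeasure P]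
    (β γ ρ : ℝ) (hβ : 0 < β) (hγ : 0 < γ) (hρ₁ : -1 < ρ) (hρ₂ : ρ < 1)
    (Z₁ Z₀ R Z₂ W₁ W₂ : Ω → ℝ)
    (b τ α θ D κ lam lam' v₀ u₀ : ℝ) (U : ℕ → ℝ) (n : ℕ)
    (hρp : (0:ℝ) < 1 + ρ) (hρsq : (0:ℝ) < 1 - ρ^2)
    (hbpos : 0 < b) (hbsq : b^2 = 1 - ρ^2) (hble : b ≤ 1)
    (hZ₂b : ∀ ω, Z₂ ω = ρ * Z₁ ω + b * Z₀ ω)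
    (hW₁ : ∀ ω, W₁ ω = R ω * Z₁ ω) (hW₂ : ∀ ω, W₂ ω = R ω * Z₂ ω)
    (hτpos : 0 < τ) (hαpos : 0 < α) (hτβ : τ * β = α) (hτα : α/2 + τ = 1)
    (hθdef : θ = 1/(1+ρ)) (hθpos : 0 < θ)
    (hDpos : 0 < D) (hlampos : 0 < lam) (hlam'pos : 0 < lam')
    (hDlam' : D < lam') (hl'l : lam' < lam)
    (hv₀pos : 0 < v₀) (hu₀pos : 0 < u₀)
    (Fden : γ*v₀^β/β + 1/(2*v₀^2) = D)
    (hUpos : ∀ k, 0 < U k) (hUmono : ∀ k, u₀ ≤ U k)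
    (hu0sq : θ/(U 0)^2 = lam)
    (hmid : ∀ k : ℕ, lam ≤ γ*(U k)^β/β + θ/(U (k+1))^2)
    (hn : lam ≤ γ*(U n)^β/β)
    (hchern : ∀ s : ℝ, 0 ≤ s →
      (P {ω | s ≤ Z₁ ω + Z₂ ω}).toReal ≤ Real.exp (-(s^2/(2*(2*(1+ρ))))))
    (triple : ∀ (A B C : Set ℝ), MeasurableSet A → MeasurableSet B → MeasurableSet C →
      P (R⁻¹' A ∩ (Z₁⁻¹' B ∩ Z₀⁻¹' C))
        = P (R⁻¹' A) * (gaussianReal 0 1 B * gaussianReal 0 1 C))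
    (pairfac : ∀ (A B : Set ℝ), MeasurableSet A → MeasurableSet B →
      P (R⁻¹' A ∩ (fun ω => Z₁ ω + Z₂ ω)⁻¹' B)
        = P (R⁻¹' A) * P ((fun ω => Z₁ ω + Z₂ ω)⁻¹' B))
    (hR0 : P {ω | R ω ≤ 0} = 0)
    (hTail : ∀ y : ℝ, 1 ≤ y →
      (P {ω | y < R ω}).toReal = Real.exp (γ/β) * Real.exp (-(γ * y^β/β)))
    (x : ℝ) (hx1 : 1 ≤ x) (hxu : 1 ≤ u₀ * x^τ) (hxv : 1 ≤ v₀ * x^τ)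
    (hxd : 2*(x^(α/2))/v₀ + 1 ≤ (lam' - D) * x^α) :
    (P {ω | x < W₁ ω ∧ x < W₂ ω}).toReal / (P {ω | x < W₂ ω}).toReal
      ≤ ((n+2:ℝ) * Real.exp (γ/β) * (2*Real.pi)) * Real.exp (-((lam-lam')*x^α)) := by
  have hxpos : (0:ℝ) < x := lt_of_lt_of_le one_pos hx1
  have hxτpos : 0 < x^τ := Real.rpow_pos_of_pos hxpos τ
  have hxαpos : 0 < x^α := Real.rpow_pos_of_pos hxpos α
  have hxhalf : 0 < x^(α/2) := Real.rpow_pos_of_pos hxpos _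
  -- power identities
  have hxkey : x^α * (x^τ)^2 = x^2 := by
    have h1 : (x^τ)^2 = x^τ * x^τ := sq (x^τ)
    rw [h1, ← Real.rpow_add hxpos, ← Real.rpow_add hxpos,
      show α + (τ + τ) = 2 by linarith [hτα],
      show (2:ℝ) = ((2:ℕ):ℝ) by norm_num, Real.rpow_natCast]
  have hxratio : x^2/(x^τ)^2 = x^α := by
    rw [← hxkey]; field_simp
  have hhalfsq : (x^(α/2))^2 = x^α := by
    rw [← Real.rpow_natCast (x^(α/2)) 2, ← Real.rpow_mul hxpos.le]
    norm_num
  have hpow : ∀ u : ℝ, 0 < u → (2*x/(u * x^τ))^2/(2*(2*(1+ρ))) = (θ/u^2) * x^α := by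
    intro u hu
    have e1 : (2*x/(u*x^τ))^2 = 4*(x^2/(x^τ)^2)/u^2 := by
      field_simp
      ring
    rw [e1, hxratio, hθdef]
    field_simp
    ring
  have hrpowmul : ∀ u : ℝ, 0 < u → (u * x^τ)^β = u^β * x^α := by
    intro u hu
    rw [Real.mul_rpow hu.le hxτpos.le, ← Real.rpow_mul hxpos.le, hτβ]
  -- numerator events
  set Enum := {ω | x < W₁ ω ∧ x < W₂ ω} with hEnumdef
  set Cs : ℕ → Set Ω := fun j => {ω | 2*x/(U j * x^τ) ≤ Z₁ ω + Z₂ ω} with hCdef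
  set As : ℕ → Set Ω := fun k => {ω | U k * x^τ < R ω} with hAdef
  have hapos : ∀ k, 0 < U k * x^τ := fun k => mul_pos (hUpos k) hxτpos
  have ha1 : ∀ k, 1 ≤ U k * x^τ := fun k =>
    le_trans hxu (mul_le_mul_of_nonneg_right (hUmono k) hxτpos.le)
  have hcover : Enum ⊆ {ω | R ω ≤ 0} ∪ (Cs 0 ∪ ((⋃ k ∈ Finset.range n, (As k ∩ Cs (k+1))) ∪ As n)) := by
    intro ω hω
    obtain ⟨hω1, hω2⟩ := hω
    rcases le_or_gt (R ω) 0 with hr | hr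
    · exact Set.mem_union_left _ hr
    refine Set.mem_union_right _ ?_
    rw [hW₁ ω] at hω1
    rw [hW₂ ω] at hω2
    have hZ1 : x / R ω < Z₁ ω := by
      rw [div_lt_iff₀ hr]
      linarith [mul_comm (R ω) (Z₁ ω)]
    have hZ2 : x / R ω < Z₂ ω := by
      rw [div_lt_iff₀ hr]
      linarith [mul_comm (R ω) (Z₂ ω)]
    have hsum : 2*x/R ω < Z₁ ω + Z₂ ω := by
      have h2 : 2*x/R ω = x/R ω + x/R ω := by ring
      rw [h2]
      linarith
    rcases le_or_gt (R ω) (U 0 * x^τ) with h0 | h0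
    · refine Set.mem_union_left _ ?_
      show 2*x/(U 0 * x^τ) ≤ Z₁ ω + Z₂ ω
      have hd : 2*x/(U 0 * x^τ) ≤ 2*x/R ω :=
        div_le_div_of_nonneg_left (by linarith) hr h0
      linarith
    rcases le_or_gt (R ω) (U n * x^τ) with h1 | h1
    · refine Set.mem_union_right _ (Set.mem_union_left _ ?_)
      obtain ⟨k, hkn, hk1, hk2⟩ := exists_cross (f := fun k => U k * x^τ) h0 h1
      refine Set.mem_biUnion (Finset.mem_range.mpr hkn) ⟨hk1, ?_⟩
      show 2*x/(U (k+1) * x^τ) ≤ Z₁ ω + Z₂ ω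
      have hd : 2*x/(U (k+1) * x^τ) ≤ 2*x/R ω :=
        div_le_div_of_nonneg_left (by linarith) hr hk2
      linarith
    · exact Set.mem_union_right _ (Set.mem_union_right _ h1)
  -- ENNReal bound
  have hm1 : P Enum ≤ P (Cs 0) + (∑ k ∈ Finset.range n, P (As k ∩ Cs (k+1))) + P (As n) := by
    calc P Enum ≤ P ({ω | R ω ≤ 0} ∪ (Cs 0 ∪ ((⋃ k ∈ Finset.range n, (As k ∩ Cs (k+1))) ∪ As n))) :=
          measure_mono hcover
      _ ≤ P {ω | R ω ≤ 0} + P (Cs 0 ∪ ((⋃ k ∈ Finset.range n, (As k ∩ Cs (k+1))) ∪ As n)) :=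
          measure_union_le _ _
      _ = P (Cs 0 ∪ ((⋃ k ∈ Finset.range n, (As k ∩ Cs (k+1))) ∪ As n)) := by
          rw [hR0, zero_add]
      _ ≤ P (Cs 0) + P ((⋃ k ∈ Finset.range n, (As k ∩ Cs (k+1))) ∪ As n) := measure_union_le _ _
      _ ≤ P (Cs 0) + (P (⋃ k ∈ Finset.range n, (As k ∩ Cs (k+1))) + P (As n)) := by
          gcongr
          exact measure_union_le _ _
      _ ≤ P (Cs 0) + ((∑ k ∈ Finset.range n, P (As k ∩ Cs (k+1))) + P (As n)) := by
          gcongr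
          exact measure_biUnion_finset_le _ _
      _ = _ := by rw [← add_assoc]
  have hm2 : (P Enum).toReal ≤ (P (Cs 0)).toReal
      + (∑ k ∈ Finset.range n, (P (As k ∩ Cs (k+1))).toReal) + (P (As n)).toReal := by
    have hfin : P (Cs 0) + (∑ k ∈ Finset.range n, P (As k ∩ Cs (k+1))) + P (As n) ≠ ⊤ := by
      refine ENNReal.add_ne_top.mpr ⟨ENNReal.add_ne_top.mpr ⟨measure_ne_top _ _, ?_⟩, measure_ne_top _ _⟩
      exact (ENNReal.sum_lt_top.mpr (fun k _ => measure_lt_top _ _)).ne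
    have h := ENNReal.toReal_mono hfin hm1
    rwa [ENNReal.toReal_add (ENNReal.add_ne_top.mpr ⟨measure_ne_top _ _,
        (ENNReal.sum_lt_top.mpr (fun k _ => measure_lt_top _ _)).ne⟩) (measure_ne_top _ _),
      ENNReal.toReal_add (measure_ne_top _ _)
        ((ENNReal.sum_lt_top.mpr (fun k _ => measure_lt_top _ _)).ne),
      ENNReal.toReal_sum (fun k _ => measure_ne_top _ _)] at h
  -- real bounds
  have hCbound : ∀ j : ℕ, (P (Cs j)).toReal ≤ Real.exp (-((θ/(U j)^2) * x^α)) := by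
    intro j
    have h := hchern (2*x/(U j * x^τ)) (div_nonneg (by linarith) (hapos j).le)
    rw [hpow (U j) (hUpos j)] at h
    exact h
  have hAbound : ∀ k : ℕ, (P (As k)).toReal
      = Real.exp (γ/β) * Real.exp (-((γ*(U k)^β/β) * x^α)) := by
    intro k
    have h := hTail (U k * x^τ) (ha1 k)
    rw [hAdef]
    simp only
    rw [h, hrpowmul (U k) (hUpos k)]
    congr 2
    ring
  have hprod : ∀ k, (P (As k ∩ Cs (k+1))).toReal
      = (P (As k)).toReal * (P (Cs (k+1))).toReal := by
    intro k
    have e1 : As k = R⁻¹' (Set.Ioi (U k * x^τ)) := rfl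
    have e2 : Cs (k+1) = (fun ω => Z₁ ω + Z₂ ω)⁻¹' (Set.Ici (2*x/(U (k+1) * x^τ))) := rfl
    rw [e1, e2, pairfac _ _ measurableSet_Ioi measurableSet_Ici, ENNReal.toReal_mul]
  have hone_le : (1:ℝ) ≤ Real.exp (γ/β) := Real.one_le_exp (by positivity)
  have hterm0 : (P (Cs 0)).toReal ≤ Real.exp (γ/β) * Real.exp (-(lam * x^α)) := by
    refine (hCbound 0).trans ?_
    rw [hu0sq]
    exact le_mul_of_one_le_left (Real.exp_nonneg _) hone_le
  have htermm : ∀ k ∈ Finset.range n, (P (As k ∩ Cs (k+1))).toReal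
      ≤ Real.exp (γ/β) * Real.exp (-(lam * x^α)) := by
    intro k _
    rw [hprod k, hAbound k]
    calc Real.exp (γ/β) * Real.exp (-((γ*(U k)^β/β) * x^α)) * (P (Cs (k+1))).toReal
        ≤ Real.exp (γ/β) * Real.exp (-((γ*(U k)^β/β) * x^α))
            * Real.exp (-((θ/(U (k+1))^2) * x^α)) := by
          apply mul_le_mul_of_nonneg_left (hCbound (k+1)) (by positivity)
      _ = Real.exp (γ/β) * Real.exp (-((γ*(U k)^β/β + θ/(U (k+1))^2) * x^α)) := by
          rw [mul_assoc, ← Real.exp_add]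
          congr 2
          ring
      _ ≤ Real.exp (γ/β) * Real.exp (-(lam * x^α)) := by
          apply mul_le_mul_of_nonneg_left _ (Real.exp_nonneg _)
          apply Real.exp_le_exp.mpr
          linarith [mul_le_mul_of_nonneg_right (hmid k) hxαpos.le]
  have htermn : (P (As n)).toReal ≤ Real.exp (γ/β) * Real.exp (-(lam * x^α)) := by
    rw [hAbound n]
    apply mul_le_mul_of_nonneg_left _ (Real.exp_nonneg _)
    apply Real.exp_le_exp.mpr
    linarith [mul_le_mul_of_nonneg_right hn hxαpos.le]
  have hNum : (P Enum).toReal ≤ (n+2:ℝ) * Real.exp (γ/β) * Real.exp (-(lam * x^α)) := by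
    have hsum := Finset.sum_le_sum htermm
    rw [Finset.sum_const, Finset.card_range, nsmul_eq_mul] at hsum
    have := add_le_add (add_le_add hterm0 hsum) htermn
    refine hm2.trans (this.trans (le_of_eq ?_))
    ring
  -- denominator
  obtain ⟨t, htdef⟩ : ∃ y : ℝ, y = x^(α/2)/v₀ := ⟨_, rfl⟩
  have htpos : 0 < t := by rw [htdef]; exact div_pos hxhalf hv₀pos
  have hxprod : x^(α/2) * x^τ = x := by
    rw [← Real.rpow_add hxpos, hτα, Real.rpow_one]
  have hxa' : x/(v₀*x^τ) = t := by
    rw [htdef, div_eq_div_iff (mul_pos hv₀pos hxτpos).ne' hv₀pos.ne']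
    linear_combination (-v₀) * hxprod
  have ht2 : t^2 = x^α/v₀^2 := by
    rw [htdef, div_pow, hhalfsq]
  set Eden := {ω | x < W₂ ω} with hEdendef
  obtain ⟨s₁, hs₁meas, hs₁incl, hs₁bd⟩ :
      ∃ s₁ : Set ℝ, MeasurableSet s₁ ∧ (∀ z ∈ s₁, ρ^2 * t ≤ ρ * z) ∧
        Real.exp (-((|ρ| * t + 1))^2/2) / Real.sqrt (2*Real.pi) ≤ (gaussianReal 0 1 s₁).toReal := by
    rcases le_or_gt 0 ρ with hρ0 | hρ0
    · refine ⟨Set.Ici (ρ*t), measurableSet_Ici, ?_, ?_⟩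
      · intro z hz
        have h : ρ*t ≤ z := hz
        calc ρ^2*t = ρ*(ρ*t) := by ring
          _ ≤ ρ*z := mul_le_mul_of_nonneg_left h hρ0
      · have h := gauss_Ioi_lb (w := ρ*t) (mul_nonneg hρ0 htpos.le)
        have hmono : gaussianReal 0 1 (Set.Ioi (ρ*t)) ≤ gaussianReal 0 1 (Set.Ici (ρ*t)) :=
          measure_mono Set.Ioi_subset_Ici_self
        rw [abs_of_nonneg hρ0]
        exact h.trans (ENNReal.toReal_mono (measure_ne_top _ _) hmono)
    · refine ⟨Set.Iic (ρ*t), measurableSet_Iic, ?_, ?_⟩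
      · intro z hz
        have h : z ≤ ρ*t := hz
        calc ρ^2*t = ρ*(ρ*t) := by ring
          _ ≤ ρ*z := mul_le_mul_of_nonpos_left h hρ0.le
      · have h := gauss_Iic_lb (w := (-ρ)*t) (mul_nonneg (by linarith) htpos.le)
        rw [abs_of_neg hρ0]
        have he : (-((-ρ)*t)) = ρ*t := by ring
        rw [he] at h
        exact h
  have hincl : (R⁻¹' (Set.Ioi (v₀*x^τ)) ∩ (Z₁⁻¹' s₁ ∩ Z₀⁻¹' (Set.Ioi (b*t)))) ⊆ Eden := by
    intro ω hω
    obtain ⟨hωR, hω1, hω0⟩ := hω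
    have hR' : v₀*x^τ < R ω := hωR
    have h1 : ρ^2*t ≤ ρ * Z₁ ω := hs₁incl _ hω1
    have h0 : b*t < Z₀ ω := hω0
    have hZ2 : t < Z₂ ω := by
      rw [hZ₂b ω]
      have e : b*(b*t) = (1-ρ^2)*t := by linear_combination t * hbsq
      linarith [mul_lt_mul_of_pos_left h0 hbpos, h1, e]
    show x < W₂ ω
    rw [hW₂ ω]
    have hcan : t * (v₀*x^τ) = x := by
      rw [← hxa']
      exact div_mul_cancel₀ x (mul_pos hv₀pos hxτpos).ne'
    calc x = (v₀*x^τ) * t := by linear_combination (-1 : ℝ) * hcan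
      _ < R ω * Z₂ ω :=
          mul_lt_mul'' hR' hZ2 (mul_pos hv₀pos hxτpos).le htpos.le
  have hDen : (2*Real.pi)⁻¹ * Real.exp (-(lam' * x^α)) ≤ (P Eden).toReal := by
    have h1 := triple (Set.Ioi (v₀*x^τ)) s₁ (Set.Ioi (b*t)) measurableSet_Ioi hs₁meas measurableSet_Ioi
    have h2 : P (R⁻¹' (Set.Ioi (v₀*x^τ)) ∩ (Z₁⁻¹' s₁ ∩ Z₀⁻¹' (Set.Ioi (b*t)))) ≤ P Eden :=
      measure_mono hincl
    have h3 := ENNReal.toReal_mono (measure_ne_top _ _) h2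
    rw [h1, ENNReal.toReal_mul, ENNReal.toReal_mul] at h3
    refine le_trans ?_ h3
    have hRterm : Real.exp (-(γ*v₀^β/β * x^α)) ≤ (P (R⁻¹' (Set.Ioi (v₀*x^τ)))).toReal := by
      have e0 : R⁻¹' (Set.Ioi (v₀*x^τ)) = {ω | v₀*x^τ < R ω} := rfl
      rw [e0, hTail _ hxv, hrpowmul v₀ hv₀pos]
      calc Real.exp (-(γ*v₀^β/β * x^α))
          = 1 * Real.exp (-(γ * (v₀^β * x^α)/β)) := by
            rw [one_mul]; congr 1; ring
        _ ≤ Real.exp (γ/β) * Real.exp (-(γ * (v₀^β * x^α)/β)) := by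
            gcongr
    have hZ0term := gauss_Ioi_lb (w := b*t) (mul_nonneg hbpos.le htpos.le)
    have hsqrt : Real.sqrt (2*Real.pi) * Real.sqrt (2*Real.pi) = 2*Real.pi :=
      Real.mul_self_sqrt (by positivity)
    calc (2*Real.pi)⁻¹ * Real.exp (-(lam' * x^α))
        ≤ Real.exp (-(γ*v₀^β/β * x^α)) *
            ((Real.exp (-((|ρ| * t + 1))^2/2) / Real.sqrt (2*Real.pi))
              * (Real.exp (-(b*t+1)^2/2) / Real.sqrt (2*Real.pi))) := by
          have heq : Real.exp (-(γ*v₀^β/β * x^α)) *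
              ((Real.exp (-((|ρ| * t + 1))^2/2) / Real.sqrt (2*Real.pi))
                * (Real.exp (-(b*t+1)^2/2) / Real.sqrt (2*Real.pi)))
              = (2*Real.pi)⁻¹ * Real.exp (-(γ*v₀^β/β * x^α) + (-((|ρ| * t + 1))^2/2) + (-(b*t+1)^2/2)) := by
            rw [div_mul_div_comm, hsqrt, Real.exp_add, Real.exp_add]
            ring
          rw [heq]
          gcongr (2*Real.pi)⁻¹ * Real.exp ?_
          -- exponent inequality
          have habs : |ρ| ≤ 1 := abs_le.mpr ⟨hρ₁.le, hρ₂.le⟩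
          have habs2 : |ρ| ^ 2 = ρ^2 := sq_abs ρ
          have hsum2 : (|ρ| * t+1)^2/2 + (b*t+1)^2/2 = t^2/2 + (|ρ| + b)*t + 1 := by
            linear_combination (t^2/2) * habs2 + (t^2/2) * hbsq
          have hmix : (|ρ| + b)*t ≤ 2*t := mul_le_mul_of_nonneg_right (by linarith) htpos.le
          have hDx : γ*v₀^β/β * x^α + x^α/(2*v₀^2) = D * x^α := by
            linear_combination x^α * Fden
          have ht2' : t^2/2 = x^α/(2*v₀^2) := by rw [ht2]; ring
          have htv : 2*t = 2*(x^(α/2))/v₀ := by rw [htdef]; ring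
          linarith [hsum2, hmix, hDx, ht2', htv, hxd]
      _ ≤ (P (R⁻¹' (Set.Ioi (v₀*x^τ)))).toReal *
            ((gaussianReal 0 1 s₁).toReal * (gaussianReal 0 1 (Set.Ioi (b*t))).toReal) := by
          gcongr <;> first | exact hRterm | exact hs₁bd | exact hZ0term | positivity
  have hDenpos : 0 < (P Eden).toReal := lt_of_lt_of_le (by positivity) hDen
  calc (P Enum).toReal / (P Eden).toReal
      ≤ ((n+2:ℝ) * Real.exp (γ/β) * Real.exp (-(lam*x^α))) / (P Eden).toReal :=
        (div_le_div_iff_of_pos_right hDenpos).mpr hNum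
      _ ≤ ((n+2:ℝ) * Real.exp (γ/β) * Real.exp (-(lam*x^α)))
          / ((2*Real.pi)⁻¹ * Real.exp (-(lam' * x^α))) :=
        div_le_div_of_nonneg_left (by positivity) (by positivity) hDen
      _ = ((n+2:ℝ) * Real.exp (γ/β) * (2*Real.pi)) * Real.exp (-((lam-lam')*x^α)) := by
        have key : Real.exp (-(lam*x^α)) = Real.exp (-((lam-lam')*x^α)) * Real.exp (-(lam'*x^α)) := by
          rw [← Real.exp_add]
          congr 1
          ring
        rw [key]
        field_simp

set_option maxHeartbeats 1000000 in
/-- (χ = 0 for the HOT model when β > 0.) Let `Z₁, Z₀` be independent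
standard normals, `Z₂ = ρ Z₁ + √(1-ρ²) Z₀` for ρ ∈ (-1,1), and let `R` be
Weibull-type(β,γ) with β > 0, γ > 0, independent of `(Z₁, Z₀)`. With `W i = R·Z i`,
`P(W₁ > x and W₂ > x) / P(W₂ > x) → 0` as `x → ∞` (asymptotic independence). -/
theorem hot_model_chi_AI
    {Ω : Type*} [MeasurableSpace Ω] (P : Measure Ω) [IsProbabilityMeasure P]
    (β γ ρ : ℝ) (hβ : 0 < β) (hγ : 0 < γ) (hρ₁ : -1 < ρ) (hρ₂ : ρ < 1)
    (Z₁ Z₀ R : Ω → ℝ)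
    (hZ₁meas : Measurable Z₁) (hZ₀meas : Measurable Z₀) (hRmeas : Measurable R)
    (hZ₁ : Measure.map Z₁ P = gaussianReal 0 1)
    (hZ₂ : Measure.map Z₀ P = gaussianReal 0 1)
    (hZindep : IndepFun Z₁ Z₀ P)
    (hRindep : IndepFun R (fun ω => (Z₁ ω, Z₀ ω)) P)
    (hRtail : ∀ x : ℝ, 1 ≤ x → (P {ω | x < R ω}).toReal = Real.exp (-γ * (x ^ β - 1) / β))
    (hRlow : ∀ x : ℝ, x < 1 → (P {ω | x < R ω}).toReal = 1)
    (Z₂ W₁ W₂ : Ω → ℝ)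
    (hZ₂def : ∀ ω, Z₂ ω = ρ * Z₁ ω + Real.sqrt (1 - ρ ^ 2) * Z₀ ω)
    (hW₁ : ∀ ω, W₁ ω = R ω * Z₁ ω) (hW₂ : ∀ ω, W₂ ω = R ω * Z₂ ω) :
    Tendsto (fun x : ℝ =>
        (P {ω | x < W₁ ω ∧ x < W₂ ω}).toReal / (P {ω | x < W₂ ω}).toReal)
      atTop (nhds 0) := by
  have hb2 : (0:ℝ) < β + 2 := by linarith
  have hρp : (0:ℝ) < 1 + ρ := by linarith
  have hρsq : (0:ℝ) < 1 - ρ^2 := by nlinarith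
  obtain ⟨b, hbdef⟩ : ∃ y : ℝ, y = Real.sqrt (1 - ρ^2) := ⟨_, rfl⟩
  have hbpos : 0 < b := by rw [hbdef]; exact Real.sqrt_pos.mpr hρsq
  have hbsq : b^2 = 1 - ρ^2 := by rw [hbdef]; exact Real.sq_sqrt hρsq.le
  have hble : b ≤ 1 := by nlinarith
  -- Z₂ pointwise with b
  have hZ₂b : ∀ ω, Z₂ ω = ρ * Z₁ ω + b * Z₀ ω := by
    intro ω; rw [hZ₂def ω, hbdef]
  have hZ₂meas : Measurable Z₂ := by
    have : Z₂ = fun ω => ρ * Z₁ ω + b * Z₀ ω := funext hZ₂b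
    rw [this]; fun_prop
  -- independence of R and the sum
  have hRS : IndepFun R (fun ω => Z₁ ω + Z₂ ω) P := by
    have hψ : Measurable (fun p : ℝ × ℝ => (1+ρ)*p.1 + b*p.2) := by fun_prop
    have h := hRindep.comp measurable_id hψ
    have heq : ((fun p : ℝ × ℝ => (1+ρ)*p.1 + b*p.2) ∘ (fun ω => (Z₁ ω, Z₀ ω)))
        = fun ω => Z₁ ω + Z₂ ω := by
      funext ω
      simp only [Function.comp_apply]
      rw [hZ₂b ω]; ring
    rw [heq] at h
    exact h
  -- Chernoff for the sum
  have hchern : ∀ s : ℝ, 0 ≤ s →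
      (P {ω | s ≤ Z₁ ω + Z₂ ω}).toReal ≤ Real.exp (-(s^2/(2*(2*(1+ρ))))) := by
    intro s hs
    have hset : {ω | s ≤ Z₁ ω + Z₂ ω} = {ω | s ≤ (1+ρ) * Z₁ ω + b * Z₀ ω} := by
      ext ω
      have : Z₁ ω + Z₂ ω = (1+ρ)*Z₁ ω + b*Z₀ ω := by rw [hZ₂b ω]; ring
      simp only [Set.mem_setOf_eq, this]
    rw [hset]
    have h := sum_gauss_chernoff P hZ₁meas hZ₀meas hZ₁ hZ₂ hZindep (1+ρ) b (by positivity) hs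
    refine h.trans (le_of_eq ?_)
    congr 2
    rw [hbsq]; ring
  -- triple factorization
  have triple : ∀ (A B C : Set ℝ), MeasurableSet A → MeasurableSet B → MeasurableSet C →
      P (R⁻¹' A ∩ (Z₁⁻¹' B ∩ Z₀⁻¹' C))
        = P (R⁻¹' A) * (gaussianReal 0 1 B * gaussianReal 0 1 C) := by
    intro A B C hA hB hC
    have h1 : Z₁⁻¹' B ∩ Z₀⁻¹' C = (fun ω => (Z₁ ω, Z₀ ω))⁻¹' (B ×ˢ C) :=
      (Set.mk_preimage_prod _ _).symm
    rw [h1, hRindep.measure_inter_preimage_eq_mul A (B ×ˢ C) hA (hB.prod hC)]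
    congr 1
    rw [← h1, hZindep.measure_inter_preimage_eq_mul B C hB hC,
      ← Measure.map_apply hZ₁meas hB, ← Measure.map_apply hZ₀meas hC, hZ₁, hZ₂]
  -- pair factorization
  have pairfac : ∀ (A B : Set ℝ), MeasurableSet A → MeasurableSet B →
      P (R⁻¹' A ∩ (fun ω => Z₁ ω + Z₂ ω)⁻¹' B)
        = P (R⁻¹' A) * P ((fun ω => Z₁ ω + Z₂ ω)⁻¹' B) :=
    fun A B hA hB => hRS.measure_inter_preimage_eq_mul A B hA hB
  -- null set
  have hR0 : P {ω | R ω ≤ 0} = 0 := by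
    have h1 := hRlow 0 (by norm_num)
    have h2 : P {ω | (0:ℝ) < R ω} = 1 := (ENNReal.toReal_eq_one_iff _).mp h1
    have h3 : {ω | R ω ≤ 0} = {ω | (0:ℝ) < R ω}ᶜ := by
      ext ω; simp [not_lt]
    have hms : MeasurableSet {ω | (0:ℝ) < R ω} := measurableSet_lt measurable_const hRmeas
    rw [h3, measure_compl hms (measure_ne_top _ _), h2]
    simp
  -- tail formula
  have hTail : ∀ y : ℝ, 1 ≤ y →
      (P {ω | y < R ω}).toReal = Real.exp (γ/β) * Real.exp (-(γ * y^β/β)) := by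
    intro y hy
    rw [hRtail y hy, ← Real.exp_add]
    congr 1
    ring
  have hb2 : (0:ℝ) < β + 2 := by linarith
  have hρp : (0:ℝ) < 1 + ρ := by linarith
  have hρsq : (0:ℝ) < 1 - ρ^2 := by nlinarith
  obtain ⟨τ, hτdef⟩ : ∃ y : ℝ, y = 2/(β+2) := ⟨_, rfl⟩
  obtain ⟨α, hαdef⟩ : ∃ y : ℝ, y = 2*β/(β+2) := ⟨_, rfl⟩
  have hτpos : 0 < τ := by rw [hτdef]; positivity
  have hαpos : 0 < α := by rw [hαdef]; positivity
  have hτβ : τ * β = α := by rw [hτdef, hαdef]; ring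
  have hτα : α/2 + τ = 1 := by rw [hτdef, hαdef]; field_simp
  obtain ⟨θ, hθdef⟩ : ∃ y : ℝ, y = 1/(1+ρ) := ⟨_, rfl⟩
  have hθpos : 0 < θ := by rw [hθdef]; positivity
  have hθhalf : 1/2 < θ := by
    rw [hθdef]
    exact one_div_lt_one_div_of_lt hρp (by linarith)
  obtain ⟨D, hDdef⟩ : ∃ y : ℝ, y = γ ^ τ * ((β+2)/(2*β)) := ⟨_, rfl⟩
  have hDpos : 0 < D := by
    have := Real.rpow_pos_of_pos hγ τ
    rw [hDdef]; positivity
  obtain ⟨κ, hκdef⟩ : ∃ y : ℝ, y = (2*θ) ^ (β/(β+2)) := ⟨_, rfl⟩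
  have hκ1 : 1 < κ := by
    rw [hκdef, Real.one_lt_rpow_iff_of_pos (by positivity)]
    left
    exact ⟨by linarith, by positivity⟩
  obtain ⟨lam', hlam'def⟩ : ∃ y : ℝ, y = D*(2+κ)/3 := ⟨_, rfl⟩
  obtain ⟨lam, hlamdef⟩ : ∃ y : ℝ, y = D*(1+2*κ)/3 := ⟨_, rfl⟩
  have hDlam' : D < lam' := by rw [hlam'def]; nlinarith
  have hl'l : lam' < lam := by rw [hlam'def, hlamdef]; nlinarith
  have hlDκ : lam < D*κ := by rw [hlamdef]; nlinarith
  have hlampos : 0 < lam := by rw [hlamdef]; nlinarith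
  have hlam'pos : 0 < lam' := by linarith
  -- F_grid
  have Fgrid : ∀ u : ℝ, 0 < u → D * κ ≤ γ*u^β/β + θ/u^2 := by
    intro u hu
    have h := amgm (A := γ/β) (B := θ) hβ (by positivity) hθpos hu
    have hc : (0:ℝ) < (β+2)/(2*β) := by positivity
    have hL : ((γ/β)/(2/(β+2)))^(2/(β+2)) * (θ/(β/(β+2)))^(β/(β+2)) = D * κ := by
      have e1 : (γ/β)/(2/(β+2)) = γ * ((β+2)/(2*β)) := by field_simp
      have e2 : θ/(β/(β+2)) = (2*θ) * ((β+2)/(2*β)) := by field_simp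
      rw [e1, e2, Real.mul_rpow hγ.le hc.le, Real.mul_rpow (by positivity) hc.le,
        mul_mul_mul_comm, ← Real.rpow_add hc]
      have hsum : 2/(β+2) + β/(β+2) = 1 := by field_simp; ring
      rw [hsum, Real.rpow_one, hDdef, hκdef, hτdef]
      ring
    calc D * κ = ((γ/β)/(2/(β+2)))^(2/(β+2)) * (θ/(β/(β+2)))^(β/(β+2)) := hL.symm
      _ ≤ (γ/β)*u^β + θ/u^2 := h
      _ = γ*u^β/β + θ/u^2 := by ring
  -- v₀ and F_den
  obtain ⟨v₀, hv₀def⟩ : ∃ y : ℝ, y = γ ^ (-(1/(β+2))) := ⟨_, rfl⟩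
  have hv₀pos : 0 < v₀ := by rw [hv₀def]; exact Real.rpow_pos_of_pos hγ _
  have Fden : γ*v₀^β/β + 1/(2*v₀^2) = D := by
    have h1 : v₀^β = γ ^ (-(β/(β+2))) := by
      rw [hv₀def, ← Real.rpow_mul hγ.le, show -(1/(β+2))*β = -(β/(β+2)) by ring]
    have h2 : v₀^2 = γ ^ (-(2/(β+2))) := by
      rw [hv₀def, ← Real.rpow_natCast (γ ^ (-(1/(β+2)))) 2, ← Real.rpow_mul hγ.le,
        show -(1/(β+2))*((2:ℕ):ℝ) = -(2/(β+2)) by push_cast; ring]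
    have h3 : γ * v₀^β = γ ^ τ := by
      rw [h1]
      nth_rewrite 1 [← Real.rpow_one γ]
      rw [← Real.rpow_add hγ, hτdef]
      congr 1
      field_simp
      ring
    have h4 : 1/v₀^2 = γ ^ τ := by
      rw [h2, one_div, ← Real.rpow_neg hγ.le, hτdef]
      congr 1
      ring
    calc γ*v₀^β/β + 1/(2*v₀^2) = (γ*v₀^β)/β + (1/v₀^2)/2 := by ring
      _ = γ^τ/β + γ^τ/2 := by rw [h3, h4]
      _ = D := by rw [hDdef]; field_simp; ring
  -- grid
  obtain ⟨q, hqdef⟩ : ∃ y : ℝ, y = (D*κ/lam) ^ (β⁻¹) := ⟨_, rfl⟩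
  have hq1 : 1 < q := by
    rw [hqdef, Real.one_lt_rpow_iff_of_pos (by positivity)]
    left
    exact ⟨(one_lt_div hlampos).mpr hlDκ, by positivity⟩
  have hq0 : (0:ℝ) < q := by linarith
  have hbase : (0:ℝ) ≤ D*κ/lam := by positivity
  have hqβ : q^β = D*κ/lam := by
    rw [hqdef]; exact Real.rpow_inv_rpow hbase hβ.ne'
  obtain ⟨u₀, hu₀def⟩ : ∃ y : ℝ, y = Real.sqrt (θ/lam) := ⟨_, rfl⟩
  have hu₀pos : 0 < u₀ := by rw [hu₀def]; exact Real.sqrt_pos.mpr (by positivity)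
  obtain ⟨U, hUdef⟩ : ∃ U : ℕ → ℝ, U = fun k => u₀ * q^k := ⟨_, rfl⟩
  have hUpos : ∀ k, 0 < U k := fun k => by rw [hUdef]; exact mul_pos hu₀pos (pow_pos hq0 k)
  have hUmono : ∀ k, u₀ ≤ U k := by
    intro k
    have h1 : (1:ℝ) ≤ q^k := one_le_pow₀ hq1.le
    rw [hUdef]
    exact le_mul_of_one_le_right hu₀pos.le h1
  have hu0sq : θ/(U 0)^2 = lam := by
    have h0 : U 0 = u₀ := by rw [hUdef]; simp
    have hsq : u₀^2 = θ/lam := by rw [hu₀def]; exact Real.sq_sqrt (by positivity)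
    rw [h0, hsq]
    field_simp
  have hUstep : ∀ k, U (k+1) = U k * q := by
    intro k
    rw [hUdef]
    simp [pow_succ]
    ring
  have hmid : ∀ k : ℕ, lam ≤ γ*(U k)^β/β + θ/(U (k+1))^2 := by
    intro k
    have hG := Fgrid (U (k+1)) (hUpos (k+1))
    have hqβpos : (0:ℝ) < q^β := Real.rpow_pos_of_pos hq0 β
    have hsplit : (U k)^β = (U (k+1))^β / q^β := by
      rw [hUstep k, Real.mul_rpow (hUpos k).le hq0.le]
      field_simp
    have heq : γ*(U k)^β/β = (γ*(U (k+1))^β/β) * (lam/(D*κ)) := by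
      rw [hsplit, hqβ]
      field_simp
    rw [heq]
    have hHnn : 0 ≤ θ/(U (k+1))^2 := by positivity
    have hGnn : 0 ≤ γ*(U (k+1))^β/β := by
      have := Real.rpow_nonneg (hUpos (k+1)).le β
      positivity
    have hfrac : lam/(D*κ) ≤ 1 := (div_le_one (by positivity)).mpr hlDκ.le
    have hfracpos : 0 < lam/(D*κ) := by positivity
    have hkey : (D*κ) * (lam/(D*κ)) = lam := by field_simp
    have big := mul_le_mul_of_nonneg_right hG hfracpos.le
    rw [hkey, add_mul] at big
    have hHf := mul_le_of_le_one_right hHnn hfrac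
    linarith
  obtain ⟨n, hn⟩ : ∃ n : ℕ, lam ≤ γ*(U n)^β/β := by
    have hUn : ∀ m : ℕ, (U m)^β = u₀^β * (q^β)^m := by
      intro m
      rw [hUdef]
      simp only
      rw [Real.mul_rpow hu₀pos.le (pow_nonneg hq0.le m), ← Real.rpow_natCast q m,
        ← Real.rpow_mul hq0.le, mul_comm (m:ℝ) β, Real.rpow_mul hq0.le, Real.rpow_natCast]
    have h1 : 1 < q^β := by rw [hqβ]; exact (one_lt_div hlampos).mpr hlDκ
    have h2 := (tendsto_pow_atTop_atTop_of_one_lt h1).eventually_ge_atTop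
      (lam*β/(γ*u₀^β))
    obtain ⟨m, hm⟩ := h2.exists
    refine ⟨m, ?_⟩
    have hu₀β : 0 < u₀^β := Real.rpow_pos_of_pos hu₀pos β
    rw [hUn m]
    have hm' := (div_le_iff₀ (by positivity : (0:ℝ) < γ * u₀^β)).mp hm
    rw [le_div_iff₀ hβ]
    calc lam*β ≤ (q^β)^m * (γ*u₀^β) := hm'
      _ = γ*(u₀^β*(q^β)^m) := by ring
  -- eventual conditions and conclusion
  have ev1 : ∀ᶠ x : ℝ in atTop, 1 ≤ x := eventually_ge_atTop 1
  have hmul : ∀ c : ℝ, 0 < c → ∀ᶠ x : ℝ in atTop, 1 ≤ c * x^τ := by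
    intro c hc
    have h := (tendsto_rpow_atTop hτpos).const_mul_atTop hc
    exact h.eventually_ge_atTop 1
  have ev4 : ∀ᶠ x : ℝ in atTop, 2*(x^(α/2))/v₀ + 1 ≤ (lam' - D) * x^α := by
    have hld : 0 < lam' - D := by linarith
    have hy := (tendsto_rpow_atTop (by positivity : 0 < α/2)).eventually_ge_atTop
      (max 1 ((2/v₀ + 1)/(lam' - D)))
    filter_upwards [hy, eventually_ge_atTop 1] with x hx hx1
    have hxpos : (0:ℝ) < x := by linarith
    have hsq : (x^(α/2))^2 = x^α := by
      rw [← Real.rpow_natCast (x^(α/2)) 2, ← Real.rpow_mul hxpos.le]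
      norm_num
    have hy1 : 1 ≤ x^(α/2) := le_trans (le_max_left _ _) hx
    have hy2 : (2/v₀ + 1)/(lam' - D) ≤ x^(α/2) := le_trans (le_max_right _ _) hx
    rw [div_le_iff₀ hld] at hy2
    have h2 : 2/v₀ + 1 ≤ (lam' - D) * x^(α/2) := by linarith
    have h3 := mul_le_mul_of_nonneg_left h2 (by positivity : (0:ℝ) ≤ x^(α/2))
    have e : x^(α/2)*((lam'-D)*x^(α/2)) = (lam'-D)*x^α := by rw [← hsq]; ring
    have e2 : x^(α/2)*(2/v₀+1) = 2*(x^(α/2))/v₀ + x^(α/2) := by ring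
    linarith
  have hmain : ∀ᶠ x : ℝ in atTop,
      (P {ω | x < W₁ ω ∧ x < W₂ ω}).toReal / (P {ω | x < W₂ ω}).toReal
        ≤ ((n+2:ℝ) * Real.exp (γ/β) * (2*Real.pi)) * Real.exp (-((lam-lam')*x^α)) := by
    filter_upwards [ev1, hmul u₀ hu₀pos, hmul v₀ hv₀pos, ev4] with x h1 h2 h3 h4
    exact hot_ratio_bound P β γ ρ hβ hγ hρ₁ hρ₂ Z₁ Z₀ R Z₂ W₁ W₂
      b τ α θ D κ lam lam' v₀ u₀ U n
      hρp hρsq hbpos hbsq hble hZ₂b hW₁ hW₂ hτpos hαpos hτβ hτα hθdef hθpos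
      hDpos hlampos hlam'pos hDlam' hl'l hv₀pos hu₀pos Fden hUpos hUmono hu0sq hmid hn
      hchern triple pairfac hR0 hTail x h1 h2 h3 h4
  have h0 : ∀ᶠ x : ℝ in atTop,
      0 ≤ (P {ω | x < W₁ ω ∧ x < W₂ ω}).toReal / (P {ω | x < W₂ ω}).toReal :=
    Eventually.of_forall (fun x => by positivity)
  have htend : Tendsto
      (fun x : ℝ => ((n+2:ℝ) * Real.exp (γ/β) * (2*Real.pi)) * Real.exp (-((lam-lam')*x^α)))
      atTop (nhds 0) := by
    have ha : Tendsto (fun x : ℝ => (lam - lam') * x^α) atTop atTop :=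
      (tendsto_rpow_atTop hαpos).const_mul_atTop (by linarith)
    have hb : Tendsto (fun x : ℝ => -((lam - lam') * x^α)) atTop atBot :=
      tendsto_neg_atTop_atBot.comp ha
    have hc := Real.tendsto_exp_atBot.comp hb
    have hd := hc.const_mul ((n+2:ℝ) * Real.exp (γ/β) * (2*Real.pi))
    simpa [Function.comp] using hd
  exact tendsto_of_tendsto_of_tendsto_of_le_of_le' tendsto_const_nhds htend h0 hmain
end

section
/- Let γ > 0, let w_1, …, w_K ≥ 0 with Σ_{k=1}^K w_k > 0, and let r_1, …, r_K ≥ 1 be fixed real numbers. Then lim_{β→0+} (1 + β · log[ Σ_{k=1}^K w_k exp((r_k^β − 1)/β) ])^{1/β} = Σ_{k=1}^K w_k r_k. That is, the β > 0 low-rank scale construction converges pointwise to the β = 0 construction as β decreases to 0. -/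
open Filter

lemma slope_exp_tendsto' : Tendsto (fun t : ℝ => (Real.exp t - 1)/t) (nhdsWithin 0 {0}ᶜ) (nhds 1) := by
  have h := Real.hasDerivAt_exp 0
  rw [hasDerivAt_iff_tendsto_slope] at h
  simpa [slope_fun_def, Real.exp_zero, div_eq_inv_mul] using h

lemma slope_log_tendsto' : Tendsto (fun x : ℝ => Real.log (1+x)/x) (nhdsWithin 0 {0}ᶜ) (nhds 1) := by
  have h : HasDerivAt (fun x : ℝ => Real.log (1+x)) 1 0 := by
    have := (Real.hasDerivAt_log (by norm_num : (1:ℝ)+0 ≠ 0)).comp 0 ((hasDerivAt_id (0:ℝ)).const_add 1)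
    simp [Function.comp_def] at this; exact this
  rw [hasDerivAt_iff_tendsto_slope] at h
  simpa [slope_fun_def, Real.log_one, div_eq_inv_mul] using h

lemma g_tendsto' : Tendsto (fun x : ℝ => if x = 0 then 1 else Real.log (1+x)/x) (nhds 0) (nhds 1) := by
  rw [← nhdsNE_sup_pure (0:ℝ)]
  refine Tendsto.sup ?_ ?_
  · refine slope_log_tendsto'.congr' ?_
    filter_upwards [self_mem_nhdsWithin] with x hx
    simp [Set.mem_compl_iff, Set.mem_singleton_iff] at hx
    simp [hx]
  · simpa using (tendsto_pure_nhds (fun x : ℝ => if x = 0 then 1 else Real.log (1+x)/x) 0)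

/-- For γ > 0, nonnegative weights `w k` with positive sum, and fixed
reals `r k ≥ 1`, the β > 0 low-rank scale construction converges pointwise to the β = 0
construction as β decreases to 0:
`(1 + β·log[∑ k, w k · exp((r k^β - 1)/β)])^(1/β) → ∑ k, w k · r k` as `β → 0⁺`. -/
theorem lowrank_scale_tendsto_beta_zero
    (γ : ℝ) (hγ : 0 < γ) (K : ℕ) (w r : Fin K → ℝ)
    (hw : ∀ k, 0 ≤ w k) (hwsum : 0 < ∑ k, w k) (hr : ∀ k, 1 ≤ r k) :
    Tendsto (fun β : ℝ =>
        (1 + β * Real.log (∑ k, w k * Real.exp ((r k ^ β - 1) / β))) ^ (1 / β))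
      (nhdsWithin 0 (Set.Ioi 0)) (nhds (∑ k, w k * r k)) := by
  set L := ∑ k, w k * r k with hLdef
  have hLpos : 0 < L := by
    calc (0:ℝ) < ∑ k, w k := hwsum
    _ ≤ L := Finset.sum_le_sum (fun k _ => by nlinarith [hw k, hr k])
  set S := fun β : ℝ => ∑ k, w k * Real.exp ((r k ^ β - 1) / β) with hSdef
  -- each exponent tends to log (r k)
  have hterm : ∀ k : Fin K, Tendsto (fun β : ℝ => (r k ^ β - 1)/β)
      (nhdsWithin 0 (Set.Ioi 0)) (nhds (Real.log (r k))) := by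
    intro k
    have hrk : (0:ℝ) < r k := lt_of_lt_of_le one_pos (hr k)
    rcases eq_or_lt_of_le (hr k) with h1 | h1
    · have heq : ∀ β : ℝ, (r k ^ β - 1)/β = 0 := by
        intro β; rw [← h1]; simp
      simpa [heq, ← h1] using (tendsto_const_nhds : Tendsto (fun _ : ℝ => (0:ℝ)) _ _)
    · set a := Real.log (r k) with ha
      have hapos : 0 < a := Real.log_pos h1
      have hmap : Tendsto (fun β : ℝ => a * β) (nhdsWithin 0 (Set.Ioi 0)) (nhdsWithin 0 {0}ᶜ) := by
        apply tendsto_nhdsWithin_of_tendsto_nhds_of_eventually_within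
        · have : Tendsto (fun β : ℝ => a * β) (nhdsWithin 0 (Set.Ioi 0)) (nhds (a * 0)) :=
            (tendsto_id.mono_left nhdsWithin_le_nhds).const_mul a
          simpa using this
        · filter_upwards [self_mem_nhdsWithin] with β hβ
          have : 0 < a * β := mul_pos hapos hβ
          simp [this.ne']
      have hcomp := (slope_exp_tendsto'.comp hmap).const_mul a
      simp only [mul_one] at hcomp
      refine hcomp.congr' ?_
      filter_upwards [self_mem_nhdsWithin] with β hβ
      have hβ0 : β ≠ 0 := ne_of_gt hβ
      have : r k ^ β = Real.exp (a * β) := by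
        rw [Real.rpow_def_of_pos hrk]
      rw [this]
      simp only [Function.comp_apply]
      field_simp
  -- the sum tends to L
  have hS : Tendsto S (nhdsWithin 0 (Set.Ioi 0)) (nhds L) := by
    rw [hLdef, hSdef]
    apply tendsto_finset_sum
    intro k _
    have hrk : (0:ℝ) < r k := lt_of_lt_of_le one_pos (hr k)
    have := Real.continuous_exp.continuousAt.tendsto.comp (hterm k)
    have := this.const_mul (w k)
    simpa [Real.exp_log hrk, Function.comp] using this
  have hlogS : Tendsto (fun β => Real.log (S β)) (nhdsWithin 0 (Set.Ioi 0))
      (nhds (Real.log L)) :=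
    ((Real.continuousAt_log hLpos.ne').tendsto).comp hS
  set x := fun β : ℝ => β * Real.log (S β) with hxdef
  have hx : Tendsto x (nhdsWithin 0 (Set.Ioi 0)) (nhds 0) := by
    have : Tendsto x (nhdsWithin 0 (Set.Ioi 0)) (nhds (0 * Real.log L)) :=
      (tendsto_id.mono_left nhdsWithin_le_nhds).mul hlogS
    simpa using this
  have hone : Tendsto (fun β => 1 + x β) (nhdsWithin 0 (Set.Ioi 0)) (nhds 1) := by
    simpa using (tendsto_const_nhds.add hx : Tendsto (fun β => 1 + x β) _ (nhds (1 + 0)))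
  have hpos : ∀ᶠ β in nhdsWithin 0 (Set.Ioi 0), 0 < 1 + x β :=
    hone.eventually (eventually_gt_nhds one_pos)
  set g := fun y : ℝ => if y = 0 then 1 else Real.log (1+y)/y with hgdef
  have hfinal : Tendsto (fun β => Real.exp (Real.log (S β) * g (x β)))
      (nhdsWithin 0 (Set.Ioi 0)) (nhds L) := by
    have hg : Tendsto (fun β => g (x β)) (nhdsWithin 0 (Set.Ioi 0)) (nhds 1) :=
      g_tendsto'.comp hx
    have := Real.continuous_exp.continuousAt.tendsto.comp (hlogS.mul hg)
    simpa [Real.exp_log hLpos, Function.comp_def] using this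
  refine hfinal.congr' ?_
  filter_upwards [self_mem_nhdsWithin, hpos] with β hβ hp
  have hβ0 : β ≠ 0 := ne_of_gt (hβ : (0:ℝ) < β)
  rw [Real.rpow_def_of_pos hp]
  congr 1
  by_cases hxz : x β = 0
  · have hlS : Real.log (S β) = 0 := by
      have := hxz
      rw [hxdef] at this
      rcases mul_eq_zero.mp this with h | h
      · exact absurd h hβ0
      · exact h
    simp [hgdef, hxz, hlS]
  · have hlS : Real.log (S β) ≠ 0 := fun h => hxz (by simp [hxdef, h])
    simp only [hgdef, hxz, if_neg, if_false]
    rw [hxdef]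
    field_simp
end
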